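/- arXiv:2410.20460 — 4 statements merged into one kernel-verified Lean document; each statement's English description precedes it below -/
import Mathlib

section
/- For a semistandard Young tableau P, the following are equivalent: (i) every entry of the first row of P is at most u and for each i the number of entries of row i less than u equals the number of entries of row i+1 at most u; (ii) every column of P contains an entry equal to u. -/
namespace Plactic

/-- Insert `x` into a weakly increasing row, returning the new row and the bumped entry. -/
def rowInsert (x : ℕ) : List ℕ → List ℕ × Option ℕ
  | [] => ([x], none)
  | y :: ys =>
    if x < y then (x :: ys, some y)
    else
      let p := rowInsert x ys
      (y :: p.1, p.2)

/-- RSK insertion of `x` into a tableau given as a list of rows. -/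
def tInsert (x : ℕ) : List (List ℕ) → List (List ℕ)
  | [] => [[x]]
  | r :: rs =>
    match rowInsert x r with
    | (r', none) => r' :: rs
    | (r', some y) => r' :: tInsert y rs

/-- The RSK insertion tableau of a word. -/
def P (w : List ℕ) : List (List ℕ) := w.foldl (fun t x => tInsert x t) []

/-- The `i`-th row (0-indexed) of the insertion tableau of `w`. -/
def row (w : List ℕ) (i : ℕ) : List ℕ := (P w).getD i []

/-- The `j`-th column (0-indexed) of a tableau, read top to bottom. -/
def col (T : List (List ℕ)) (j : ℕ) : List ℕ := T.filterMap (fun r => r[j]?)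

/-- An elementary Knuth transposition. -/
inductive KStep : List ℕ → List ℕ → Prop
  | k1 (x y : List ℕ) (a b c : ℕ) : a ≤ b → b < c →
      KStep (x ++ [a, c, b] ++ y) (x ++ [c, a, b] ++ y)
  | k2 (x y : List ℕ) (a b c : ℕ) : a < b → b ≤ c →
      KStep (x ++ [b, a, c] ++ y) (x ++ [b, c, a] ++ y)

/-- Knuth equivalence: the equivalence relation generated by Knuth transpositions. -/
def KEquiv : List ℕ → List ℕ → Prop := Relation.EqvGen KStep

/-- The centralizer of `u` in the plactic monoid. -/
def Cent (u : List ℕ) : Set (List ℕ) := {w | KEquiv (u ++ w) (w ++ u)}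

end Plactic

/-- A down-closed finset of naturals is `range` of its card. -/
lemma downClosed_mem_iff_lt_card (S : Finset ℕ)
    (h : ∀ j ∈ S, ∀ k, k ≤ j → k ∈ S) (j : ℕ) : j ∈ S ↔ j < S.card := by
  constructor
  · intro hj
    have hsub : Finset.range (j + 1) ⊆ S := by
      intro k hk
      exact h j hj k (Nat.lt_succ_iff.mp (Finset.mem_range.mp hk))
    have := Finset.card_le_card hsub
    simpa using this
  · intro hj
    by_contra hns
    have hsub : S ⊆ Finset.range j := by
      intro k hk
      rw [Finset.mem_range]
      by_contra hkj
      exact hns (h k hk j (Nat.le_of_not_lt hkj))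
    have := Finset.card_le_card hsub
    simp at this
    omega

theorem stmt_5 (μ : YoungDiagram) (T : SemistandardYoungTableau μ) (u : ℕ) (hu : 0 < u) :
    ((∀ j < μ.rowLen 0, T 0 j ≤ u) ∧
      ∀ i, ((Finset.range (μ.rowLen i)).filter (fun j => T i j < u)).card =
           ((Finset.range (μ.rowLen (i + 1))).filter (fun j => T (i + 1) j ≤ u)).card)
    ↔ (∀ j < μ.rowLen 0, ∃ i, (i, j) ∈ μ ∧ T i j = u) := by
  -- notation
  set A : ℕ → Finset ℕ := fun i => (Finset.range (μ.rowLen i)).filter (fun j => T i j < u) with hA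
  set B : ℕ → Finset ℕ := fun i => (Finset.range (μ.rowLen i)).filter (fun j => T i j ≤ u) with hB
  have memA : ∀ i j, j ∈ A i ↔ j < μ.rowLen i ∧ T i j < u := by
    intro i j; simp [hA]
  have memB : ∀ i j, j ∈ B i ↔ j < μ.rowLen i ∧ T i j ≤ u := by
    intro i j; simp [hB]
  have dcA : ∀ i j, j ∈ A i ↔ j < (A i).card := by
    intro i
    apply downClosed_mem_iff_lt_card
    intro j hj k hk
    rw [memA] at hj ⊢
    refine ⟨lt_of_le_of_lt hk hj.1, ?_⟩
    rcases eq_or_lt_of_le hk with rfl | hlt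
    · exact hj.2
    · exact lt_of_le_of_lt (T.row_weak hlt (YoungDiagram.mem_iff_lt_rowLen.mpr hj.1)) hj.2
  have dcB : ∀ i j, j ∈ B i ↔ j < (B i).card := by
    intro i
    apply downClosed_mem_iff_lt_card
    intro j hj k hk
    rw [memB] at hj ⊢
    refine ⟨lt_of_le_of_lt hk hj.1, ?_⟩
    rcases eq_or_lt_of_le hk with rfl | hlt
    · exact hj.2
    · exact le_trans (T.row_weak hlt (YoungDiagram.mem_iff_lt_rowLen.mpr hj.1)) hj.2
  constructor
  · rintro ⟨h0, hcard⟩ j hj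
    -- descending induction on colLen j - i
    have key : ∀ n i, μ.colLen j ≤ i + n → j ∈ B i → ∃ i', (i', j) ∈ μ ∧ T i' j = u := by
      intro n
      induction n with
      | zero =>
        intro i hle hjB
        exfalso
        rw [memB] at hjB
        have : (i, j) ∈ μ := YoungDiagram.mem_iff_lt_rowLen.mpr hjB.1
        rw [YoungDiagram.mem_iff_lt_colLen] at this
        omega
      | succ n ih =>
        intro i hle hjB
        have hmem : (i, j) ∈ μ := YoungDiagram.mem_iff_lt_rowLen.mpr ((memB i j).mp hjB).1
        by_cases hA' : j ∈ A i
        · -- descend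
          have : j < (A i).card := (dcA i j).mp hA'
          rw [hcard i] at this
          have hjB' : j ∈ B (i + 1) := (dcB (i + 1) j).mpr this
          apply ih (i + 1)
          · omega
          · exact hjB'
        · refine ⟨i, hmem, ?_⟩
          rw [memA] at hA'
          rw [memB] at hjB
          omega
    apply key (μ.colLen j) 0
    · omega
    · rw [memB]
      exact ⟨hj, h0 j hj⟩
  · intro h
    -- first: row 0 entries ≤ u
    have h0 : ∀ j < μ.rowLen 0, T 0 j ≤ u := by
      intro j hj
      obtain ⟨i, hmem, hTu⟩ := h j hj
      rcases Nat.eq_zero_or_pos i with rfl | hi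
      · exact le_of_eq hTu
      · exact hTu ▸ le_of_lt (T.col_strict hi hmem)
    refine ⟨h0, ?_⟩
    intro i
    -- show A i = B (i+1)
    have hset : A i = B (i + 1) := by
      ext j
      rw [memA, memB]
      constructor
      · rintro ⟨hjr, hjlt⟩
        have hmem : (i, j) ∈ μ := YoungDiagram.mem_iff_lt_rowLen.mpr hjr
        have hj0 : j < μ.rowLen 0 := lt_of_lt_of_le hjr (μ.rowLen_anti 0 i (Nat.zero_le i))
        obtain ⟨i', hmem', hTu⟩ := h j hj0
        have hii' : i < i' := by
          by_contra hle
          push_neg at hle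
          rcases eq_or_lt_of_le hle with rfl | hlt
          · omega
          · have := T.col_strict hlt hmem
            omega
        have hmem1 : (i + 1, j) ∈ μ := by
          rw [YoungDiagram.mem_iff_lt_colLen] at hmem' ⊢
          omega
        refine ⟨YoungDiagram.mem_iff_lt_rowLen.mp hmem1, ?_⟩
        rcases eq_or_lt_of_le (Nat.succ_le_of_lt hii') with rfl | hlt
        · exact le_of_eq hTu
        · exact hTu ▸ le_of_lt (T.col_strict hlt hmem')
      · rintro ⟨hjr, hjle⟩
        have hmem1 : (i + 1, j) ∈ μ := YoungDiagram.mem_iff_lt_rowLen.mpr hjr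
        have hmem : (i, j) ∈ μ := by
          rw [YoungDiagram.mem_iff_lt_colLen] at hmem1 ⊢
          omega
        refine ⟨YoungDiagram.mem_iff_lt_rowLen.mp hmem, ?_⟩
        exact lt_of_lt_of_le (T.col_strict (Nat.lt_succ_self i) hmem1) hjle
    rw [hA, hB] at hset
    simp only [hset]
end

section
/- A word w over the positive integers lies in C(1) if and only if the first row of P(w) consists entirely of 1's. -/
namespace Plactic

open List

/- ## Basic KEquiv lemmas -/

lemma keq_refl (w : List ℕ) : KEquiv w w := Relation.EqvGen.refl w
lemma keq_symm {u v} (h : KEquiv u v) : KEquiv v u := Relation.EqvGen.symm _ _ h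
lemma keq_trans {u v t} (h : KEquiv u v) (h' : KEquiv v t) : KEquiv u t :=
  Relation.EqvGen.trans _ _ _ h h'
lemma keq_of_step {u v} (h : KStep u v) : KEquiv u v := Relation.EqvGen.rel _ _ h

lemma kstep_append_left {u v} (z : List ℕ) (h : KStep u v) : KStep (z ++ u) (z ++ v) := by
  cases h with
  | k1 x y a b c h1 h2 =>
    have := KStep.k1 (z ++ x) y a b c h1 h2
    simpa [List.append_assoc] using this
  | k2 x y a b c h1 h2 =>
    have := KStep.k2 (z ++ x) y a b c h1 h2
    simpa [List.append_assoc] using this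

lemma kstep_append_right {u v} (z : List ℕ) (h : KStep u v) : KStep (u ++ z) (v ++ z) := by
  cases h with
  | k1 x y a b c h1 h2 =>
    have := KStep.k1 x (y ++ z) a b c h1 h2
    simpa [List.append_assoc] using this
  | k2 x y a b c h1 h2 =>
    have := KStep.k2 x (y ++ z) a b c h1 h2
    simpa [List.append_assoc] using this

lemma keq_append_left {u v} (z : List ℕ) (h : KEquiv u v) : KEquiv (z ++ u) (z ++ v) := by
  induction h with
  | rel a b hab => exact keq_of_step (kstep_append_left z hab)
  | refl a => exact keq_refl _
  | symm a b _ ih => exact keq_symm ih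
  | trans a b c _ _ ih1 ih2 => exact keq_trans ih1 ih2

lemma keq_append_right {u v} (z : List ℕ) (h : KEquiv u v) : KEquiv (u ++ z) (v ++ z) := by
  induction h with
  | rel a b hab => exact keq_of_step (kstep_append_right z hab)
  | refl a => exact keq_refl _
  | symm a b _ ih => exact keq_symm ih
  | trans a b c _ _ ih1 ih2 => exact keq_trans ih1 ih2

lemma keq_cons {u v} (a : ℕ) (h : KEquiv u v) : KEquiv (a :: u) (a :: v) := by
  simpa using keq_append_left [a] h

lemma kstep_k1' (t : List ℕ) {a b c : ℕ} (h1 : a ≤ b) (h2 : b < c) :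
    KStep (a :: c :: b :: t) (c :: a :: b :: t) := by
  simpa using KStep.k1 [] t a b c h1 h2

lemma kstep_k2' (t : List ℕ) {a b c : ℕ} (h1 : a < b) (h2 : b ≤ c) :
    KStep (b :: a :: c :: t) (b :: c :: a :: t) := by
  simpa using KStep.k2 [] t a b c h1 h2

/- ## rowInsert lemmas -/

lemma mem_rowInsert {e x : ℕ} {r : List ℕ} (h : e ∈ (rowInsert x r).1) : e = x ∨ e ∈ r := by
  induction r with
  | nil => simp [rowInsert] at h; tauto
  | cons y ys ih =>
    by_cases hxy : x < y
    · simp only [rowInsert, if_pos hxy, mem_cons] at h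
      rcases h with h | h
      · exact Or.inl h
      · exact Or.inr (mem_cons_of_mem _ h)
    · simp only [rowInsert, if_neg hxy, mem_cons] at h
      rcases h with h | h
      · exact Or.inr (h ▸ mem_cons_self)
      · rcases ih h with h' | h'
        · exact Or.inl h'
        · exact Or.inr (mem_cons_of_mem _ h')

lemma rowInsert_sorted {x : ℕ} {r : List ℕ} (hr : r.Pairwise (· ≤ ·)) :
    (rowInsert x r).1.Pairwise (· ≤ ·) := by
  induction r with
  | nil => simp [rowInsert]
  | cons y ys ih =>
    rw [pairwise_cons] at hr
    by_cases hxy : x < y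
    · simp only [rowInsert, if_pos hxy]
      exact pairwise_cons.2 ⟨fun b hb => le_trans (le_of_lt hxy) (hr.1 b hb), hr.2⟩
    · simp only [rowInsert, if_neg hxy]
      refine pairwise_cons.2 ⟨fun b hb => ?_, ih hr.2⟩
      rcases mem_rowInsert hb with h | h
      · exact h ▸ le_of_not_gt hxy
      · exact hr.1 b h

lemma rowInsert_none {x : ℕ} {r : List ℕ} (h : (rowInsert x r).2 = none) :
    (rowInsert x r).1 = r ++ [x] := by
  induction r with
  | nil => simp [rowInsert]
  | cons y ys ih =>
    by_cases hxy : x < y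
    · simp [rowInsert, hxy] at h
    · simp [rowInsert, hxy] at h ⊢
      exact ih h

lemma rowInsert_some {x y : ℕ} {r : List ℕ} (h : (rowInsert x r).2 = some y) :
    x < y ∧ y ∈ r ∧ ∃ h' t', (rowInsert x r).1 = h' :: t' ∧ h' ≤ x := by
  induction r with
  | nil => simp [rowInsert] at h
  | cons z zs ih =>
    by_cases hxz : x < z
    · simp only [rowInsert, if_pos hxz, Option.some.injEq] at h
      subst h
      exact ⟨hxz, mem_cons_self, x, zs, by simp [rowInsert, hxz], le_rfl⟩
    · simp only [rowInsert, if_neg hxz] at h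
      obtain ⟨h1, h2, h3⟩ := ih h
      exact ⟨h1, mem_cons_of_mem _ h2, z, (rowInsert x zs).1, by simp [rowInsert, hxz], le_of_not_gt hxz⟩


/- ## The bumping lemma -/

/-- Move a small element right through a row of larger elements. -/
lemma move_right {x z : ℕ} (t : List ℕ) (hxz : x < z) (hz : ∀ e ∈ t, z ≤ e)
    (ht : t.Pairwise (· ≤ ·)) : KEquiv (z :: x :: t) (z :: (t ++ [x])) := by
  induction t generalizing z with
  | nil => exact keq_refl _
  | cons d t' ih =>
    rw [pairwise_cons] at ht
    have hzd : z ≤ d := hz d (mem_cons_self)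
    have step : KStep (z :: x :: d :: t') (z :: d :: x :: t') := kstep_k2' t' hxz hzd
    have ihd : KEquiv (d :: x :: t') (d :: (t' ++ [x])) :=
      ih (lt_of_lt_of_le hxz hzd) ht.1 ht.2
    exact keq_trans (keq_of_step step) (keq_cons z ihd)

lemma bump {x y : ℕ} {r : List ℕ} (hr : r.Pairwise (· ≤ ·))
    (h : (rowInsert x r).2 = some y) :
    KEquiv (y :: (rowInsert x r).1) (r ++ [x]) := by
  induction r with
  | nil => simp [rowInsert] at h
  | cons z t ih =>
    rw [pairwise_cons] at hr
    by_cases hxz : x < z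
    · simp only [rowInsert, if_pos hxz, Option.some.injEq] at h
      subst h
      have h1 : (rowInsert x (z :: t)).1 = x :: t := by simp [rowInsert, hxz]
      rw [h1]
      exact move_right t hxz hr.1 hr.2
    · simp only [rowInsert, if_neg hxz] at h
      have h1 : (rowInsert x (z :: t)).1 = z :: (rowInsert x t).1 := by
        simp [rowInsert, hxz]
      rw [h1]
      obtain ⟨hxy, hyt, h0, t'', ht'', hh0⟩ := rowInsert_some h
      have hz0 : z ≤ h0 := by
        have : h0 ∈ (rowInsert x t).1 := ht'' ▸ mem_cons_self
        rcases mem_rowInsert this with he | he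
        · exact he ▸ le_of_not_gt hxz
        · exact hr.1 _ he
      -- swap y and z at the front
      have step : KStep (z :: y :: h0 :: t'') (y :: z :: h0 :: t'') :=
        kstep_k1' t'' hz0 (lt_of_le_of_lt hh0 hxy)
      have ihk : KEquiv (z :: (y :: (rowInsert x t).1)) (z :: (t ++ [x])) :=
        keq_cons z (ih hr.2 h)
      rw [ht''] at ihk ⊢
      exact keq_trans (keq_symm (keq_of_step step)) ihk


/- ## Tableau reading word -/

def read (T : List (List ℕ)) : List ℕ := T.reverse.flatten

@[simp] lemma read_nil : read ([] : List (List ℕ)) = [] := rfl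

lemma read_cons (r : List ℕ) (rs : List (List ℕ)) : read (r :: rs) = read rs ++ r := by
  simp [read]

def SortedRows (T : List (List ℕ)) : Prop := ∀ r ∈ T, r.Pairwise (· ≤ ·)

lemma tInsert_sortedRows {x : ℕ} {T : List (List ℕ)} (hT : SortedRows T) :
    SortedRows (tInsert x T) := by
  induction T generalizing x with
  | nil =>
    intro r hr
    simp [tInsert] at hr
    simp [hr]
  | cons r rs ih =>
    have hr : r.Pairwise (· ≤ ·) := hT r (mem_cons_self)
    have hrs : SortedRows rs := fun r' h' => hT r' (mem_cons_of_mem _ h')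
    intro q hq
    rcases h2 : (rowInsert x r).2 with _ | y
    · have : tInsert x (r :: rs) = (rowInsert x r).1 :: rs := by
        simp only [tInsert]
        rcases hrw : rowInsert x r with ⟨r', o⟩
        rw [hrw] at h2; subst h2; simp
      rw [this] at hq
      rcases mem_cons.1 hq with h | h
      · exact h ▸ rowInsert_sorted hr
      · exact hrs _ h
    · have : tInsert x (r :: rs) = (rowInsert x r).1 :: tInsert y rs := by
        simp only [tInsert]
        rcases hrw : rowInsert x r with ⟨r', o⟩
        rw [hrw] at h2; subst h2; simp
      rw [this] at hq
      rcases mem_cons.1 hq with h | h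
      · exact h ▸ rowInsert_sorted hr
      · exact ih hrs _ h

lemma read_tInsert {x : ℕ} {T : List (List ℕ)} (hT : SortedRows T) :
    KEquiv (read (tInsert x T)) (read T ++ [x]) := by
  induction T generalizing x with
  | nil => simp [tInsert, read]; exact keq_refl _
  | cons r rs ih =>
    have hr : r.Pairwise (· ≤ ·) := hT r (mem_cons_self)
    have hrs : SortedRows rs := fun r' h' => hT r' (mem_cons_of_mem _ h')
    rcases h2 : (rowInsert x r).2 with _ | y
    · have ht : tInsert x (r :: rs) = (rowInsert x r).1 :: rs := by
        simp only [tInsert]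
        rcases hrw : rowInsert x r with ⟨r', o⟩
        rw [hrw] at h2; subst h2; simp
      rw [ht, read_cons, rowInsert_none h2, read_cons]
      simp only [← List.append_assoc]
      exact keq_refl _
    · have ht : tInsert x (r :: rs) = (rowInsert x r).1 :: tInsert y rs := by
        simp only [tInsert]
        rcases hrw : rowInsert x r with ⟨r', o⟩
        rw [hrw] at h2; subst h2; simp
      rw [ht, read_cons, read_cons]
      have hh1 : KEquiv (read (tInsert y rs) ++ (rowInsert x r).1)
          (read rs ++ (y :: (rowInsert x r).1)) := by
        simpa [List.append_assoc] using keq_append_right (rowInsert x r).1 (ih hrs)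
      have hh2 : KEquiv (read rs ++ (y :: (rowInsert x r).1)) (read rs ++ (r ++ [x])) :=
        keq_append_left _ (bump hr h2)
      simpa [List.append_assoc] using keq_trans hh1 hh2

lemma P_sortedRows (w : List ℕ) : SortedRows (P w) := by
  suffices h : ∀ T, SortedRows T → SortedRows (w.foldl (fun t x => tInsert x t) T) by
    exact h [] (by intro r hr; simp at hr)
  induction w with
  | nil => intro T hT; exact hT
  | cons a w ih =>
    intro T hT
    exact ih _ (tInsert_sortedRows hT)

lemma keq_read_P (w : List ℕ) : KEquiv w (read (P w)) := by
  suffices h : ∀ T, SortedRows T → KEquiv (read (w.foldl (fun t x => tInsert x t) T)) (read T ++ w) by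
    have := h [] (by intro r hr; simp at hr)
    simpa [P] using keq_symm this
  induction w with
  | nil => intro T hT; simp; exact keq_refl _
  | cons a w ih =>
    intro T hT
    have h1 := ih (tInsert a T) (tInsert_sortedRows hT)
    simp only [List.foldl_cons]
    refine keq_trans h1 ?_
    have h2 : KEquiv (read (tInsert a T) ++ w) ((read T ++ [a]) ++ w) :=
      keq_append_right w (read_tInsert hT)
    simpa [List.append_assoc] using h2


/- ## Prepending 1 to a word -/

def prepend1 : List (List ℕ) → List (List ℕ)
  | [] => [[1]]
  | r :: rs => (1 :: r) :: rs

lemma tInsert_prepend1 {x : ℕ} (hx : 0 < x) (T : List (List ℕ)) :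
    tInsert x (prepend1 T) = prepend1 (tInsert x T) := by
  have hx1 : ¬ x < 1 := by omega
  cases T with
  | nil => simp [prepend1, tInsert, rowInsert, hx1]
  | cons r rs =>
    have hrow : rowInsert x (1 :: r) = (1 :: (rowInsert x r).1, (rowInsert x r).2) := by
      simp [rowInsert, hx1]
    rcases h2 : (rowInsert x r).2 with _ | y
    · have e1 : tInsert x (r :: rs) = (rowInsert x r).1 :: rs := by
        simp only [tInsert]; rcases hrw : rowInsert x r with ⟨r', o⟩
        rw [hrw] at h2; subst h2; simp
      have e2 : tInsert x ((1 :: r) :: rs) = (1 :: (rowInsert x r).1) :: rs := by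
        simp only [tInsert]; rw [hrow, h2]
      simp [prepend1, e1, e2]
    · have e1 : tInsert x (r :: rs) = (rowInsert x r).1 :: tInsert y rs := by
        simp only [tInsert]; rcases hrw : rowInsert x r with ⟨r', o⟩
        rw [hrw] at h2; subst h2; simp
      have e2 : tInsert x ((1 :: r) :: rs) = (1 :: (rowInsert x r).1) :: tInsert y rs := by
        simp only [tInsert]; rw [hrow, h2]
      simp [prepend1, e1, e2]

lemma P_cons_one {w : List ℕ} (hw : ∀ x ∈ w, 0 < x) : P (1 :: w) = prepend1 (P w) := by
  suffices h : ∀ T, (w.foldl (fun t x => tInsert x t) (prepend1 T)) =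
      prepend1 (w.foldl (fun t x => tInsert x t) T) by
    have h0 : tInsert 1 ([] : List (List ℕ)) = prepend1 [] := by simp [tInsert, prepend1]
    simp only [P, List.foldl_cons, h0]
    exact h []
  induction w with
  | nil => intro T; simp
  | cons a w ih =>
    intro T
    have ha : 0 < a := hw a (mem_cons_self)
    have ih' := ih (fun x hx => hw x (mem_cons_of_mem _ hx))
    simp only [List.foldl_cons, tInsert_prepend1 ha, ih' (tInsert a T)]

lemma P_append_one (w : List ℕ) : P (w ++ [1]) = tInsert 1 (P w) := by
  simp [P, List.foldl_append]

lemma rowInsert_one_of_ones {r : List ℕ} (h : ∀ x ∈ r, x = 1) :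
    rowInsert 1 r = (r ++ [1], none) := by
  induction r with
  | nil => simp [rowInsert]
  | cons y ys ih =>
    have hy : y = 1 := h y (mem_cons_self)
    subst hy
    have : ¬ (1:ℕ) < 1 := lt_irrefl 1
    simp [rowInsert, this, ih (fun x hx => h x (mem_cons_of_mem _ hx))]

lemma P_ne_nil {w : List ℕ} (hw : w ≠ []) : P w ≠ [] := by
  suffices h : ∀ T : List (List ℕ), ∀ v : List ℕ, T ≠ [] ∨ v ≠ [] →
      v.foldl (fun t x => tInsert x t) T ≠ [] by
    exact h [] w (Or.inr hw)
  intro T v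
  induction v generalizing T with
  | nil => intro h; simp; tauto
  | cons a v ih =>
    intro _
    simp only [List.foldl_cons]
    refine ih _ (Or.inl ?_)
    cases T with
    | nil => simp [tInsert]
    | cons r rs =>
      simp only [tInsert]
      rcases hrw : rowInsert a r with ⟨r', o⟩
      cases o <;> simp

/- ## Entries of the tableau -/

lemma tInsert_lb {m x : ℕ} {T : List (List ℕ)} (hT : ∀ r ∈ T, ∀ e ∈ r, m ≤ e)
    (hx : m ≤ x) : ∀ r ∈ tInsert x T, ∀ e ∈ r, m ≤ e := by
  induction T generalizing x with
  | nil =>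
    intro r hr e he
    simp [tInsert] at hr
    subst hr; simp at he; omega
  | cons r rs ih =>
    have hr : ∀ e ∈ r, m ≤ e := hT r (mem_cons_self)
    have hrs : ∀ r' ∈ rs, ∀ e ∈ r', m ≤ e := fun r' h' => hT r' (mem_cons_of_mem _ h')
    intro q hq e he
    have hmem : ∀ e ∈ (rowInsert x r).1, m ≤ e := by
      intro e' he'
      rcases mem_rowInsert he' with h | h
      · omega
      · exact hr _ h
    rcases h2 : (rowInsert x r).2 with _ | y
    · have ht : tInsert x (r :: rs) = (rowInsert x r).1 :: rs := by
        simp only [tInsert]; rcases hrw : rowInsert x r with ⟨r', o⟩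
        rw [hrw] at h2; subst h2; simp
      rw [ht] at hq
      rcases mem_cons.1 hq with h | h
      · exact hmem e (h ▸ he)
      · exact hrs _ h e he
    · have ht : tInsert x (r :: rs) = (rowInsert x r).1 :: tInsert y rs := by
        simp only [tInsert]; rcases hrw : rowInsert x r with ⟨r', o⟩
        rw [hrw] at h2; subst h2; simp
      rw [ht] at hq
      rcases mem_cons.1 hq with h | h
      · exact hmem e (h ▸ he)
      · have hy : m ≤ y := hr y (rowInsert_some h2).2.1
        exact ih hrs hy _ h e he

/-- entries of rows below the first are at least 2 -/
def Tail2 (T : List (List ℕ)) : Prop := ∀ r ∈ T.tail, ∀ e ∈ r, 2 ≤ e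

lemma tInsert_tail2 {x : ℕ} {T : List (List ℕ)} (hx : 0 < x) (hT : Tail2 T) :
    Tail2 (tInsert x T) := by
  cases T with
  | nil => intro r hr; simp [tInsert] at hr
  | cons r rs =>
    rcases h2 : (rowInsert x r).2 with _ | y
    · have ht : tInsert x (r :: rs) = (rowInsert x r).1 :: rs := by
        simp only [tInsert]; rcases hrw : rowInsert x r with ⟨r', o⟩
        rw [hrw] at h2; subst h2; simp
      rw [Tail2, ht]
      exact hT
    · have ht : tInsert x (r :: rs) = (rowInsert x r).1 :: tInsert y rs := by
        simp only [tInsert]; rcases hrw : rowInsert x r with ⟨r', o⟩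
        rw [hrw] at h2; subst h2; simp
      rw [Tail2, ht]
      have hy : 2 ≤ y := by
        have := (rowInsert_some h2).1
        omega
      exact tInsert_lb (fun r' h' => hT r' h') hy

lemma P_tail2 {w : List ℕ} (hw : ∀ x ∈ w, 0 < x) : Tail2 (P w) := by
  suffices h : ∀ T, Tail2 T → Tail2 (w.foldl (fun t x => tInsert x t) T) by
    exact h [] (by intro r hr; simp at hr)
  induction w with
  | nil => intro T hT; exact hT
  | cons a w ih =>
    intro T hT
    exact ih (fun x hx => hw x (mem_cons_of_mem _ hx)) _
      (tInsert_tail2 (hw a (mem_cons_self)) hT)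


/- ## Longest weakly increasing subsequence -/

def L (w : List ℕ) : ℕ :=
  ((w.sublists.filter fun s => decide (s.Pairwise (· ≤ ·))).map List.length).foldr max 0

lemma le_foldr_max {a : ℕ} {l : List ℕ} (h : a ∈ l) : a ≤ l.foldr max 0 := by
  induction l with
  | nil => simp at h
  | cons b t ih =>
    rcases mem_cons.1 h with h | h
    · subst h; exact le_max_left _ _
    · exact le_trans (ih h) (le_max_right _ _)

lemma foldr_max_mem (l : List ℕ) : l.foldr max 0 = 0 ∨ l.foldr max 0 ∈ l := by
  induction l with
  | nil => simp
  | cons b t ih =>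
    simp only [List.foldr_cons]
    rcases ih with h | h
    · rw [h]; right; simp
    · rcases le_total b (t.foldr max 0) with hle | hle
      · rw [max_eq_right hle]; right; exact mem_cons_of_mem _ h
      · rw [max_eq_left hle]; right; exact mem_cons_self

lemma length_le_L {s w : List ℕ} (hs : s.Sublist w) (hsort : s.Pairwise (· ≤ ·)) :
    s.length ≤ L w := by
  apply le_foldr_max
  exact mem_map_of_mem (mem_filter.2 ⟨mem_sublists.2 hs, by simpa using hsort⟩)

lemma exists_L (w : List ℕ) : ∃ s, List.Sublist s w ∧ s.Pairwise (· ≤ ·) ∧ s.length = L w := by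
  have h := foldr_max_mem ((w.sublists.filter fun s => decide (s.Pairwise (· ≤ ·))).map List.length)
  rcases h with h | h
  · exact ⟨[], nil_sublist w, by simp, by simp [L, h]⟩
  · rw [List.mem_map] at h
    obtain ⟨s, hs, hlen⟩ := h
    rw [mem_filter] at hs
    exact ⟨s, mem_sublists.1 hs.1, by simpa using hs.2, hlen⟩

/-- local transfer principle -/
lemma L_le_local {m m' : List ℕ}
    (hmap : ∀ sm, List.Sublist sm m → List.Pairwise (· ≤ ·) sm → ∃ sm',
      List.Sublist sm' m' ∧ List.Pairwise (· ≤ ·) sm' ∧ List.length sm' = List.length sm ∧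
      (∀ u, (∀ v ∈ sm, u ≤ v) → (∀ v ∈ sm', u ≤ v)) ∧
      (∀ u, (∀ v ∈ sm, v ≤ u) → (∀ v ∈ sm', v ≤ u)))
    (x y : List ℕ) : L (x ++ m ++ y) ≤ L (x ++ m' ++ y) := by
  obtain ⟨s, hsub, hsort, hlen⟩ := exists_L (x ++ m ++ y)
  rw [← hlen]
  rw [List.append_assoc, List.sublist_append_iff] at hsub
  obtain ⟨s1, s23, rfl, hs1, hs23⟩ := hsub
  rw [List.sublist_append_iff] at hs23
  obtain ⟨s2, s3, rfl, hs2, hs3⟩ := hs23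
  rw [List.pairwise_append] at hsort
  obtain ⟨hp1, hp23, h123⟩ := hsort
  rw [List.pairwise_append] at hp23
  obtain ⟨hp2, hp3, h23⟩ := hp23
  obtain ⟨s2', hsub', hsort', hlen', hlb, hub⟩ := hmap s2 hs2 hp2
  have : (s1 ++ (s2' ++ s3)).Pairwise (· ≤ ·) := by
    rw [List.pairwise_append, List.pairwise_append]
    refine ⟨hp1, ⟨hsort', hp3, fun a ha b hb => ?_⟩, fun a ha b hb => ?_⟩
    · exact hub b (fun v hv => h23 v hv b hb) a ha
    · rcases mem_append.1 hb with hb | hb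
      · exact hlb a (fun v hv => h123 a ha v (mem_append_left _ hv)) b hb
      · exact h123 a ha b (mem_append_right _ hb)
  have hsl : (s1 ++ (s2' ++ s3)).Sublist (x ++ (m' ++ y)) :=
    List.Sublist.append hs1 (List.Sublist.append hsub' hs3)
  have := length_le_L (by simpa [List.append_assoc] using hsl) this
  simpa [hlen'] using this

lemma sorted_pair {p q : ℕ} (h : List.Pairwise (· ≤ ·) [p, q]) : p ≤ q := by
  simpa using h

lemma triv_map {sm m' : List ℕ} (h : List.Sublist sm m') (hs : List.Pairwise (· ≤ ·) sm) :
    ∃ sm', List.Sublist sm' m' ∧ List.Pairwise (· ≤ ·) sm' ∧ List.length sm' = List.length sm ∧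
      (∀ u, (∀ v ∈ sm, u ≤ v) → (∀ v ∈ sm', u ≤ v)) ∧
      (∀ u, (∀ v ∈ sm, v ≤ u) → (∀ v ∈ sm', v ≤ u)) :=
  ⟨sm, h, hs, rfl, fun _ hu => hu, fun _ hu => hu⟩

lemma sublist_three {sm : List ℕ} {p q r : ℕ} (h : List.Sublist sm [p, q, r]) :
    sm = [] ∨ sm = [p] ∨ sm = [q] ∨ sm = [r] ∨ sm = [p, q] ∨ sm = [p, r] ∨ sm = [q, r] ∨
      sm = [p, q, r] := by
  rcases List.sublist_cons_iff.1 h with h1 | ⟨t1, rfl, h1⟩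
  · rcases List.sublist_cons_iff.1 h1 with h2 | ⟨t2, rfl, h2⟩
    · rcases List.sublist_cons_iff.1 h2 with h3 | ⟨t3, rfl, h3⟩
      · simp [List.sublist_nil.1 h3]
      · simp [List.sublist_nil.1 h3]
    · rcases List.sublist_cons_iff.1 h2 with h3 | ⟨t3, rfl, h3⟩
      · simp [List.sublist_nil.1 h3]
      · simp [List.sublist_nil.1 h3]
  · rcases List.sublist_cons_iff.1 h1 with h2 | ⟨t2, rfl, h2⟩
    · rcases List.sublist_cons_iff.1 h2 with h3 | ⟨t3, rfl, h3⟩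
      · simp [List.sublist_nil.1 h3]
      · simp [List.sublist_nil.1 h3]
    · rcases List.sublist_cons_iff.1 h2 with h3 | ⟨t3, rfl, h3⟩
      · simp [List.sublist_nil.1 h3]
      · simp [List.sublist_nil.1 h3]

lemma kstep_L {u v : List ℕ} (h : KStep u v) : L u = L v := by
  cases h with
  | k1 x y a b c hab hbc =>
    apply Nat.le_antisymm
    · apply L_le_local (fun sm hsub hsort => ?_) x y
      rcases sublist_three hsub with rfl | rfl | rfl | rfl | rfl | rfl | rfl | rfl
      · exact triv_map (by simp) hsort
      · exact triv_map (by simp) hsort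
      · exact triv_map (by simp) hsort
      · exact triv_map (by simp) hsort
      · -- [a, c] ↦ [a, b]
        refine ⟨[a, b], by simp, by simp [hab], rfl, ?_, ?_⟩
        · intro u hu v hv
          have h5 := hu a (by simp)
          have h6 := hu c (by simp)
          simp only [List.mem_cons, List.not_mem_nil, or_false] at hv
          rcases hv with rfl | rfl <;> omega
        · intro u hu v hv
          have h5 := hu a (by simp)
          have h6 := hu c (by simp)
          simp only [List.mem_cons, List.not_mem_nil, or_false] at hv
          rcases hv with rfl | rfl <;> omega
      · exact triv_map (by simp) hsort
      · exact absurd (sorted_pair hsort) (by omega)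
      · exfalso
        simp [List.pairwise_cons] at hsort
        omega
    · apply L_le_local (fun sm hsub hsort => ?_) x y
      rcases sublist_three hsub with rfl | rfl | rfl | rfl | rfl | rfl | rfl | rfl
      · exact triv_map (by simp) hsort
      · exact triv_map (by simp) hsort
      · exact triv_map (by simp) hsort
      · exact triv_map (by simp) hsort
      · exact absurd (sorted_pair hsort) (by omega)
      · exact absurd (sorted_pair hsort) (by omega)
      · exact triv_map (by simp) hsort
      · exfalso
        simp [List.pairwise_cons] at hsort
        omega
  | k2 x y a b c hab hbc =>
    apply Nat.le_antisymm
    · apply L_le_local (fun sm hsub hsort => ?_) x y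
      rcases sublist_three hsub with rfl | rfl | rfl | rfl | rfl | rfl | rfl | rfl
      · exact triv_map (by simp) hsort
      · exact triv_map (by simp) hsort
      · exact triv_map (by simp) hsort
      · exact triv_map (by simp) hsort
      · exact absurd (sorted_pair hsort) (by omega)
      · exact triv_map (by simp) hsort
      · -- [a, c] ↦ [b, c]
        refine ⟨[b, c], by simp, by simp [hbc], rfl, ?_, ?_⟩
        · intro u hu v hv
          have h5 := hu a (by simp)
          have h6 := hu c (by simp)
          simp only [List.mem_cons, List.not_mem_nil, or_false] at hv
          rcases hv with rfl | rfl <;> omega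
        · intro u hu v hv
          have h5 := hu a (by simp)
          have h6 := hu c (by simp)
          simp only [List.mem_cons, List.not_mem_nil, or_false] at hv
          rcases hv with rfl | rfl <;> omega
      · exfalso
        simp [List.pairwise_cons] at hsort
        omega
    · apply L_le_local (fun sm hsub hsort => ?_) x y
      rcases sublist_three hsub with rfl | rfl | rfl | rfl | rfl | rfl | rfl | rfl
      · exact triv_map (by simp) hsort
      · exact triv_map (by simp) hsort
      · exact triv_map (by simp) hsort
      · exact triv_map (by simp) hsort
      · exact triv_map (by simp) hsort
      · exact absurd (sorted_pair hsort) (by omega)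
      · exact absurd (sorted_pair hsort) (by omega)
      · exfalso
        simp [List.pairwise_cons] at hsort
        omega

lemma keq_L {u v : List ℕ} (h : KEquiv u v) : L u = L v := by
  induction h with
  | rel a b hab => exact kstep_L hab
  | refl a => rfl
  | symm a b _ ih => exact ih.symm
  | trans a b c _ _ ih1 ih2 => exact ih1.trans ih2

lemma kstep_count {u v : List ℕ} (h : KStep u v) : u.count 1 = v.count 1 := by
  cases h with
  | k1 x y a b c _ _ => simp [List.count_append, List.count_cons]; omega
  | k2 x y a b c _ _ => simp [List.count_append, List.count_cons]; omega

lemma keq_count {u v : List ℕ} (h : KEquiv u v) : u.count 1 = v.count 1 := by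
  induction h with
  | rel a b hab => exact kstep_count hab
  | refl a => rfl
  | symm a b _ ih => exact ih.symm
  | trans a b c _ _ ih1 ih2 => exact ih1.trans ih2


/- ## L of words with a 1 added -/

lemma sorted_replicate (n : ℕ) (a : ℕ) : (List.replicate n a).Pairwise (· ≤ ·) := by
  induction n with
  | zero => simp
  | succ n ih =>
    rw [List.replicate_succ, List.pairwise_cons]
    exact ⟨fun b hb => le_of_eq (List.eq_of_mem_replicate hb).symm, ih⟩

lemma L_cons_one {w : List ℕ} (hw : ∀ x ∈ w, 0 < x) : L (1 :: w) = L w + 1 := by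
  apply Nat.le_antisymm
  · obtain ⟨s, hsub, hsort, hlen⟩ := exists_L (1 :: w)
    rw [← hlen]
    rcases List.sublist_cons_iff.1 hsub with h | ⟨t, rfl, h⟩
    · have := length_le_L h hsort; omega
    · have : t.length ≤ L w := length_le_L h (by rw [List.pairwise_cons] at hsort; exact hsort.2)
      simp only [List.length_cons]; omega
  · obtain ⟨s, hsub, hsort, hlen⟩ := exists_L w
    have h1 : (1 :: s).Sublist (1 :: w) := hsub.cons₂ 1
    have h2 : (1 :: s).Pairwise (· ≤ ·) :=
      List.pairwise_cons.2 ⟨fun b hb => hw b (hsub.subset hb), hsort⟩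
    have := length_le_L h1 h2
    simp only [List.length_cons] at this; omega

lemma L_append_one {w : List ℕ} (hw : ∀ x ∈ w, 0 < x) :
    L (w ++ [1]) = max (L w) (w.count 1 + 1) := by
  apply Nat.le_antisymm
  · obtain ⟨s, hsub, hsort, hlen⟩ := exists_L (w ++ [1])
    rw [← hlen]
    rw [List.sublist_append_iff] at hsub
    obtain ⟨s1, s2, rfl, hs1, hs2⟩ := hsub
    rcases List.sublist_cons_iff.1 hs2 with h2 | ⟨t2, rfl, h2⟩
    · rw [List.sublist_nil.1 h2, List.append_nil]
      have := length_le_L hs1 (by simpa [List.sublist_nil.1 h2] using hsort)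
      omega
    · rw [List.sublist_nil.1 h2] at hsort hs2 ⊢
      have hone : ∀ b ∈ s1, b = 1 := by
        intro b hb
        have hble : b ≤ 1 := by
          rw [List.pairwise_append] at hsort
          exact hsort.2.2 b hb 1 (by simp)
        have : 0 < b := hw b (hs1.subset hb)
        omega
      have : s1 = List.replicate s1.length 1 := List.eq_replicate_of_mem hone
      have hcnt : s1.length ≤ w.count 1 :=
        List.replicate_sublist_iff.1 (by rw [← this]; exact hs1)
      simp only [List.length_append, List.length_cons, List.length_nil]
      omega
  · rw [max_le_iff]
    constructor
    · obtain ⟨s, hsub, hsort, hlen⟩ := exists_L w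
      rw [← hlen]
      exact length_le_L (hsub.trans (List.sublist_append_left w [1])) hsort
    · have hrep : (List.replicate (w.count 1) 1).Sublist w :=
        List.replicate_sublist_iff.2 le_rfl
      have hsub : (List.replicate (w.count 1 + 1) 1).Sublist (w ++ [1]) := by
        rw [List.replicate_succ']
        exact List.Sublist.append hrep (List.Sublist.refl [1])
      have := length_le_L hsub (sorted_replicate _ _)
      simpa using this

lemma count_one_read {T : List (List ℕ)} (hT : Tail2 T) :
    (read T).count 1 = (T.getD 0 []).count 1 := by
  cases T with
  | nil => simp [read]
  | cons r rs =>
    rw [read_cons, List.count_append]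
    have hz : (read rs).count 1 = 0 := by
      rw [List.count_eq_zero]
      intro hmem
      obtain ⟨q, hq, h1q⟩ := List.mem_flatten.1 hmem
      have := hT q (by simpa using hq) 1 h1q
      omega
    simp [hz]


end Plactic

open Plactic in
theorem stmt_6 (w : List ℕ) (hw : ∀ x ∈ w, 0 < x) :
    w ∈ Cent [1] ↔ ∀ x ∈ row w 0, x = 1 := by
  constructor
  · intro h
    have h' : KEquiv (1 :: w) (w ++ [1]) := by
      have : KEquiv ([1] ++ w) (w ++ [1]) := h
      simpa using this
    have hL := keq_L h'
    rw [L_cons_one hw, L_append_one hw] at hL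
    have hcL : L w ≤ w.count 1 := by
      rcases le_or_gt (w.count 1 + 1) (L w) with hc | hc
      · rw [max_eq_left hc] at hL; omega
      · omega
    have hrT := keq_read_P w
    have hLrT : L (read (P w)) = L w := (keq_L hrT).symm
    have hcount : (read (P w)).count 1 = w.count 1 := (keq_count hrT).symm
    cases hP : P w with
    | nil =>
      intro x hx
      simp [row, hP] at hx
    | cons r rs =>
      have hr0 : row w 0 = r := by simp [row, hP]
      have hrmem : r ∈ P w := by rw [hP]; exact List.mem_cons_self
      have hrsort : r.Pairwise (· ≤ ·) := P_sortedRows w r hrmem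
      have hrsub : r.Sublist (read (P w)) := by
        rw [hP, read_cons]
        exact List.sublist_append_right (read rs) r
      have hlen : r.length ≤ L (read (P w)) := length_le_L hrsub hrsort
      have hcnt : (read (P w)).count 1 = r.count 1 := by
        rw [count_one_read (P_tail2 hw), hP]
        simp
      have hle : r.count 1 ≤ r.length := List.count_le_length
      have : r.count 1 = r.length := by omega
      have hall := List.count_eq_length.1 this
      rw [hr0]
      exact fun x hx => (hall x hx).symm
  · intro h
    by_cases hwnil : w = []
    · subst hwnil
      show KEquiv ([1] ++ []) ([] ++ [1])
      simp only [List.append_nil, List.nil_append]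
      exact keq_refl _
    · cases hP : P w with
      | nil => exact absurd hP (P_ne_nil hwnil)
      | cons r rs =>
        have hr : ∀ x ∈ r, x = 1 := by
          intro x hx
          apply h
          simp [row, hP]
          exact hx
        have e1 : P (1 :: w) = (1 :: r) :: rs := by
          rw [P_cons_one hw, hP]; rfl
        have e2 : P (w ++ [1]) = (r ++ [1]) :: rs := by
          rw [P_append_one, hP]
          simp only [tInsert, rowInsert_one_of_ones hr]
        have e3 : (1 :: r) = r ++ [1] := by
          have hrep : r = List.replicate r.length 1 := List.eq_replicate_of_mem hr
          rw [hrep]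
          rw [← List.replicate_succ, ← List.replicate_succ']
        have ePP : P (1 :: w) = P (w ++ [1]) := by rw [e1, e2, e3]
        have keq1 : KEquiv (1 :: w) (read (P (1 :: w))) := keq_read_P _
        have keq2 : KEquiv (w ++ [1]) (read (P (w ++ [1]))) := keq_read_P _
        have : KEquiv (1 :: w) (w ++ [1]) := by
          rw [ePP] at keq1
          exact keq_trans keq1 (keq_symm keq2)
        show KEquiv ([1] ++ w) (w ++ [1])
        simpa using this
end

section
/- A word w over the alphabet {1,2} lies in C(1) if and only if w is Yamanouchi, i.e., every suffix of w contains at least as many 1's as 2's. -/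
namespace Plactic

-- state machine

def stp (x : ℕ) (p : ℕ × ℕ) : ℕ × ℕ :=
  if x = 1 then (p.1 + 1, p.2)
  else if p.1 = 0 then (0, p.2 + 1) else (p.1 - 1, p.2)

def S (w : List ℕ) : ℕ × ℕ := w.foldr stp (0, 0)

lemma comm121 (p : ℕ × ℕ) : stp 1 (stp 2 (stp 1 p)) = stp 2 (stp 1 (stp 1 p)) := by
  rcases p with ⟨a, b⟩
  simp only [stp]
  split_ifs <;> simp_all <;> omega

lemma comm212 (p : ℕ × ℕ) : stp 2 (stp 1 (stp 2 p)) = stp 2 (stp 2 (stp 1 p)) := by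
  rcases p with ⟨a, b⟩
  simp only [stp]
  split_ifs <;> simp_all <;> omega



lemma KStep.cons {u v : List ℕ} (a : ℕ) (h : KStep u v) : KStep (a :: u) (a :: v) := by
  cases h with
  | k1 x y a' b c h1 h2 =>
      simpa [List.cons_append] using KStep.k1 (a :: x) y a' b c h1 h2
  | k2 x y a' b c h1 h2 =>
      simpa [List.cons_append] using KStep.k2 (a :: x) y a' b c h1 h2

lemma KEquiv.refl (u : List ℕ) : KEquiv u u := Relation.EqvGen.refl u
lemma KEquiv.symm {u v : List ℕ} (h : KEquiv u v) : KEquiv v u := Relation.EqvGen.symm _ _ h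
lemma KEquiv.trans {u v z : List ℕ} (h : KEquiv u v) (h' : KEquiv v z) : KEquiv u z :=
  Relation.EqvGen.trans _ _ _ h h'

lemma KEquiv.cons {u v : List ℕ} (a : ℕ) (h : KEquiv u v) : KEquiv (a :: u) (a :: v) := by
  induction h with
  | rel x y hxy => exact Relation.EqvGen.rel _ _ (hxy.cons a)
  | refl x => exact KEquiv.refl _
  | symm x y _ ih => exact ih.symm
  | trans x y z _ _ ih1 ih2 => exact ih1.trans ih2

lemma KEquiv.appendLeft {u v : List ℕ} (l : List ℕ) (h : KEquiv u v) :
    KEquiv (l ++ u) (l ++ v) := by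
  induction l with
  | nil => simpa using h
  | cons a t ih => simpa using ih.cons a

lemma keq121 (y : List ℕ) : KEquiv (1 :: 2 :: 1 :: y) (2 :: 1 :: 1 :: y) :=
  Relation.EqvGen.rel _ _ (by simpa using KStep.k1 [] y 1 1 2 le_rfl one_lt_two)

lemma keq212 (y : List ℕ) : KEquiv (2 :: 1 :: 2 :: y) (2 :: 2 :: 1 :: y) :=
  Relation.EqvGen.rel _ _ (by simpa using KStep.k2 [] y 1 2 2 one_lt_two le_rfl)

-- move a 1 rightwards through 2s, given a leading 2
lemma lemC (r : ℕ) (v : List ℕ) :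
    KEquiv (2 :: 1 :: List.replicate r 2 ++ v) (2 :: List.replicate r 2 ++ 1 :: v) := by
  induction r generalizing v with
  | zero => exact KEquiv.refl _
  | succ r ih =>
      have h1 : KEquiv (2 :: 1 :: 2 :: (List.replicate r 2 ++ v))
          (2 :: 2 :: 1 :: (List.replicate r 2 ++ v)) := keq212 _
      have h2 := (ih v).cons 2
      simp only [List.replicate_succ, List.cons_append] at *
      exact h1.trans h2


-- diagonal: 1 · 2^r · 1^r · u  ~  2^r · 1^(r+1) · u
lemma lemD (r : ℕ) (u : List ℕ) :
    KEquiv (1 :: (List.replicate r 2 ++ List.replicate r 1 ++ u))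
      (List.replicate r 2 ++ List.replicate (r + 1) 1 ++ u) := by
  induction r generalizing u with
  | zero => simpa using KEquiv.refl (1 :: u)
  | succ r ih =>
      have s1 : KEquiv
          (1 :: 2 :: (List.replicate r 2 ++ (List.replicate (r + 1) 1 ++ u)))
          (1 :: 2 :: 1 :: (List.replicate r 2 ++ (List.replicate r 1 ++ u))) := by
        have hh := ((ih u).symm.cons 2).cons 1
        simp only [List.cons_append, List.append_assoc] at hh ⊢
        exact hh
      have s2 : KEquiv
          (1 :: 2 :: 1 :: (List.replicate r 2 ++ (List.replicate r 1 ++ u)))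
          (2 :: 1 :: 1 :: (List.replicate r 2 ++ (List.replicate r 1 ++ u))) := by
        have hh := keq121 (List.replicate r 2 ++ List.replicate r 1 ++ u)
        simp only [List.cons_append, List.append_assoc] at hh ⊢
        exact hh
      have s3 : KEquiv
          (2 :: 1 :: 1 :: (List.replicate r 2 ++ (List.replicate r 1 ++ u)))
          (2 :: 1 :: (List.replicate r 2 ++ (List.replicate (r + 1) 1 ++ u))) := by
        have hh := ((ih u).cons 1).cons 2
        simp only [List.cons_append, List.append_assoc] at hh ⊢
        exact hh
      have s4 : KEquiv
          (2 :: 1 :: (List.replicate r 2 ++ (List.replicate (r + 1) 1 ++ u)))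
          (2 :: (List.replicate r 2 ++ 1 :: (List.replicate (r + 1) 1 ++ u))) := by
        have hh := lemC r (List.replicate (r + 1) 1 ++ u)
        simp only [List.cons_append, List.append_assoc] at hh ⊢
        exact hh
      have main := ((s1.trans s2).trans s3).trans s4
      simp only [List.replicate_succ, List.cons_append, List.append_assoc] at main ⊢
      exact main

-- general: r ≤ p → 1 · 2^r · 1^p · u ~ 2^r · 1^(p+1) · u
lemma lemH {r p : ℕ} (h : r ≤ p) (u : List ℕ) :
    KEquiv (1 :: (List.replicate r 2 ++ List.replicate p 1 ++ u))
      (List.replicate r 2 ++ List.replicate (p + 1) 1 ++ u) := by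
  obtain ⟨k, rfl⟩ := Nat.exists_eq_add_of_le h
  have e : r + k + 1 = (r + 1) + k := by omega
  rw [e, List.replicate_add r k 1, List.replicate_add (r + 1) k 1]
  have hh := lemD r (List.replicate k 1 ++ u)
  simp only [List.cons_append, List.append_assoc] at hh ⊢
  exact hh

-- move a 2 from the left block to the right: 2^(p+1) · 1^p · v ~ 2^p · 1^p · 2 · v
lemma lemE (p : ℕ) (v : List ℕ) :
    KEquiv (List.replicate (p + 1) 2 ++ List.replicate p 1 ++ v)
      (List.replicate p 2 ++ List.replicate p 1 ++ 2 :: v) := by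
  induction p generalizing v with
  | zero => simpa using KEquiv.refl (2 :: v)
  | succ p ih =>
      have s1 : KEquiv
          (2 :: (List.replicate (p + 1) 2 ++ 1 :: (List.replicate p 1 ++ v)))
          (2 :: 1 :: (List.replicate (p + 1) 2 ++ (List.replicate p 1 ++ v))) := by
        have hh := (lemC (p + 1) (List.replicate p 1 ++ v)).symm
        simp only [List.cons_append, List.append_assoc] at hh ⊢
        exact hh
      have s2 : KEquiv
          (2 :: 1 :: (List.replicate (p + 1) 2 ++ (List.replicate p 1 ++ v)))
          (2 :: 1 :: (List.replicate p 2 ++ (List.replicate p 1 ++ 2 :: v))) := by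
        have hh := ((ih v).cons 1).cons 2
        simp only [List.cons_append, List.append_assoc] at hh ⊢
        exact hh
      have s3 : KEquiv
          (2 :: 1 :: (List.replicate p 2 ++ (List.replicate p 1 ++ 2 :: v)))
          (2 :: (List.replicate p 2 ++ 1 :: (List.replicate p 1 ++ 2 :: v))) := by
        have hh := lemC p (List.replicate p 1 ++ 2 :: v)
        simp only [List.cons_append, List.append_assoc] at hh ⊢
        exact hh
      have main := (s1.trans s2).trans s3
      simp only [List.replicate_succ, List.cons_append, List.append_assoc] at main ⊢
      exact main


lemma S_append (u v : List ℕ) : S (u ++ v) = u.foldr stp (S v) := by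
  simp [S, List.foldr_append]

lemma kstep_mem {u v : List ℕ} (h : KStep u v) : ∀ x, x ∈ u ↔ x ∈ v := by
  cases h <;> intro x <;> simp [List.mem_append, List.mem_cons] <;> tauto

lemma kstep_S {u v : List ℕ} (h : KStep u v) (hu : ∀ x ∈ u, x = 1 ∨ x = 2) :
    S u = S v := by
  cases h with
  | k1 x y a b c h1 h2 =>
      have ha : a = 1 ∨ a = 2 := hu a (by simp)
      have hb : b = 1 ∨ b = 2 := hu b (by simp)
      have hc : c = 1 ∨ c = 2 := hu c (by simp)
      have ea : a = 1 := by omega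
      have eb : b = 1 := by omega
      have ec : c = 2 := by omega
      subst ea; subst eb; subst ec
      have : List.foldr stp (S y) [1, 2, 1] = List.foldr stp (S y) [2, 1, 1] :=
        comm121 (S y)
      calc S (x ++ [1, 2, 1] ++ y) = x.foldr stp (List.foldr stp (S y) [1, 2, 1]) := by
            rw [List.append_assoc, S_append, S_append]
        _ = x.foldr stp (List.foldr stp (S y) [2, 1, 1]) := by rw [this]
        _ = S (x ++ [2, 1, 1] ++ y) := by rw [List.append_assoc, S_append, S_append]
  | k2 x y a b c h1 h2 =>
      have ha : a = 1 ∨ a = 2 := hu a (by simp)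
      have hb : b = 1 ∨ b = 2 := hu b (by simp)
      have hc : c = 1 ∨ c = 2 := hu c (by simp)
      have ea : a = 1 := by omega
      have eb : b = 2 := by omega
      have ec : c = 2 := by omega
      subst ea; subst eb; subst ec
      have : List.foldr stp (S y) [2, 1, 2] = List.foldr stp (S y) [2, 2, 1] :=
        comm212 (S y)
      calc S (x ++ [2, 1, 2] ++ y) = x.foldr stp (List.foldr stp (S y) [2, 1, 2]) := by
            rw [List.append_assoc, S_append, S_append]
        _ = x.foldr stp (List.foldr stp (S y) [2, 2, 1]) := by rw [this]
        _ = S (x ++ [2, 2, 1] ++ y) := by rw [List.append_assoc, S_append, S_append]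

lemma kequiv_inv {u v : List ℕ} (h : KEquiv u v) :
    (∀ x, x ∈ u ↔ x ∈ v) ∧ ((∀ x ∈ u, x = 1 ∨ x = 2) → S u = S v) := by
  induction h with
  | rel x y hxy => exact ⟨kstep_mem hxy, kstep_S hxy⟩
  | refl x => exact ⟨fun _ => Iff.rfl, fun _ => rfl⟩
  | symm x y hxy ih =>
      refine ⟨fun z => (ih.1 z).symm, fun hv => ?_⟩
      exact (ih.2 (fun z hz => hv z ((ih.1 z).mp hz))).symm
  | trans x y z hxy hyz ih1 ih2 =>
      refine ⟨fun a => (ih1.1 a).trans (ih2.1 a), fun hx => ?_⟩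
      exact (ih1.2 hx).trans (ih2.2 (fun a ha => hx a ((ih1.1 a).mpr ha)))

-- the shift lemma: effect of an extra unmatched 1 at the start state
lemma shiftL (w : List ℕ) (a : ℕ) :
    w.foldr stp (a + 1, 0) =
      (if (w.foldr stp (a, 0)).2 = 0 then ((w.foldr stp (a, 0)).1 + 1, 0)
        else ((w.foldr stp (a, 0)).1, (w.foldr stp (a, 0)).2 - 1)) := by
  induction w with
  | nil => simp
  | cons x t ih =>
      simp only [List.foldr_cons, ih]
      rcases eq_or_ne x 1 with hx | hx
      · subst hx
        simp only [stp, if_pos rfl]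
        split_ifs <;> simp_all
      · simp only [stp, if_neg hx]
        split_ifs <;> simp_all <;> omega

-- count identity: count1 + m2 = count2 + m1
lemma count_id {w : List ℕ} (hw : ∀ x ∈ w, x = 1 ∨ x = 2) :
    w.count 1 + (S w).2 = w.count 2 + (S w).1 := by
  induction w with
  | nil => simp [S]
  | cons x t ih =>
      have hx : x = 1 ∨ x = 2 := hw x (by simp)
      have ih' := ih (fun z hz => hw z (by simp [hz]))
      have hS : S (x :: t) = stp x (S t) := rfl
      rcases hx with hx | hx <;> subst hx <;>
        simp only [hS, stp, List.count_cons] <;> split_ifs <;> simp_all <;> omega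

lemma m1_le {w : List ℕ} (hw : ∀ x ∈ w, x = 1 ∨ x = 2) : (S w).1 ≤ w.count 1 := by
  induction w with
  | nil => simp [S]
  | cons x t ih =>
      have hx : x = 1 ∨ x = 2 := hw x (by simp)
      have ih' := ih (fun z hz => hw z (by simp [hz]))
      have hS : S (x :: t) = stp x (S t) := rfl
      rcases hx with hx | hx <;> subst hx <;>
        simp only [hS, stp, List.count_cons] <;> split_ifs <;> simp_all <;> omega

lemma m2_le {w : List ℕ} (hw : ∀ x ∈ w, x = 1 ∨ x = 2) : (S w).2 ≤ w.count 2 := by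
  induction w with
  | nil => simp [S]
  | cons x t ih =>
      have hx : x = 1 ∨ x = 2 := hw x (by simp)
      have ih' := ih (fun z hz => hw z (by simp [hz]))
      have hS : S (x :: t) = stp x (S t) := rfl
      rcases hx with hx | hx <;> subst hx <;>
        simp only [hS, stp, List.count_cons] <;> split_ifs <;> simp_all <;> omega

lemma stp_snd_mono (x : ℕ) (p : ℕ × ℕ) : p.2 ≤ (stp x p).2 := by
  simp only [stp]; split_ifs <;> simp <;> omega

lemma suffix_m2_le {s w : List ℕ} (h : s.IsSuffix w) : (S s).2 ≤ (S w).2 := by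
  obtain ⟨t, rfl⟩ := h
  rw [S_append]
  induction t with
  | nil => simp
  | cons x t ih => exact le_trans ih (stp_snd_mono x _)

-- Yamanouchi implies m2 = 0
lemma yam_m2 {w : List ℕ} (hw : ∀ x ∈ w, x = 1 ∨ x = 2)
    (hy : ∀ s : List ℕ, s.IsSuffix w → s.count 2 ≤ s.count 1) : (S w).2 = 0 := by
  induction w with
  | nil => simp [S]
  | cons x t ih =>
      have hwt : ∀ z ∈ t, z = 1 ∨ z = 2 := fun z hz => hw z (by simp [hz])
      have hyt : ∀ s : List ℕ, s.IsSuffix t → s.count 2 ≤ s.count 1 :=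
        fun s hs => hy s (hs.trans (List.suffix_cons x t))
      have ht := ih hwt hyt
      have hx : x = 1 ∨ x = 2 := hw x (by simp)
      have hS : S (x :: t) = stp x (S t) := rfl
      rcases hx with hx | hx <;> subst hx
      · simp [hS, stp, ht]
      · rcases eq_or_ne (S t).1 0 with h1 | h1
        · exfalso
          have hid := count_id hwt
          have hself := hy (2 :: t) (List.suffix_refl _)
          simp [List.count_cons] at hself
          omega
        · simp [hS, stp, h1, ht]


/-- canonical form of a {1,2}-word -/
def canon (w : List ℕ) : List ℕ :=
  List.replicate (w.count 2 - (S w).2) 2 ++ List.replicate (w.count 1) 1 ++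
    List.replicate ((S w).2) 2

lemma CANON : ∀ w : List ℕ, (∀ x ∈ w, x = 1 ∨ x = 2) → KEquiv w (canon w) := by
  intro w
  induction w with
  | nil => intro _; simpa [canon, S] using KEquiv.refl ([] : List ℕ)
  | cons x t ih =>
      intro hw
      have hwt : ∀ z ∈ t, z = 1 ∨ z = 2 := fun z hz => hw z (by simp [hz])
      have hx : x = 1 ∨ x = 2 := hw x (by simp)
      have step1 : KEquiv (x :: t) (x :: canon t) := (ih hwt).cons x
      have hid := count_id hwt
      have hm1 := m1_le hwt
      have hm2 := m2_le hwt
      have hr : t.count 2 - (S t).2 ≤ t.count 1 := by omega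
      rcases hx with hx | hx <;> subst hx
      · -- x = 1
        have hS : S (1 :: t) = ((S t).1 + 1, (S t).2) := by
          have e : S (1 :: t) = stp 1 (S t) := rfl
          rw [e]; simp [stp]
        have hgoal : canon (1 :: t) =
            List.replicate (t.count 2 - (S t).2) 2 ++
              List.replicate (t.count 1 + 1) 1 ++ List.replicate ((S t).2) 2 := by
          simp [canon, hS, List.count_cons]
        rw [hgoal]
        have hH := lemH hr (List.replicate ((S t).2) 2)
        exact step1.trans (by simpa [canon] using hH)
      · -- x = 2
        rcases eq_or_ne (S t).1 0 with h1 | h1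
        · -- unmatched: the new 2 goes to the first row
          have hS : S (2 :: t) = (0, (S t).2 + 1) := by
            have e : S (2 :: t) = stp 2 (S t) := rfl
            rw [e]; simp [stp, h1]
          have hp : t.count 2 - (S t).2 = t.count 1 := by omega
          have hgoal : canon (2 :: t) =
              List.replicate (t.count 1) 2 ++ List.replicate (t.count 1) 1 ++
                List.replicate ((S t).2 + 1) 2 := by
            have hc2 : (2 :: t : List ℕ).count 2 = t.count 2 + 1 := by simp
            have hc1 : (2 :: t : List ℕ).count 1 = t.count 1 := by simp
            simp only [canon, hS, hc1, hc2]
            rw [show t.count 2 + 1 - ((S t).2 + 1) = t.count 1 from by omega]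
          rw [hgoal]
          have hE := lemE (t.count 1) (List.replicate ((S t).2) 2)
          have hct : canon t = List.replicate (t.count 1 + 1 - 1) 2 ++
              List.replicate (t.count 1) 1 ++ List.replicate ((S t).2) 2 := by
            simp [canon, hp]
          refine step1.trans ?_
          rw [hct]
          have hfin : KEquiv (2 :: (List.replicate (t.count 1 + 1 - 1) 2 ++
              List.replicate (t.count 1) 1 ++ List.replicate ((S t).2) 2))
              (List.replicate (t.count 1) 2 ++ List.replicate (t.count 1) 1 ++
                List.replicate ((S t).2 + 1) 2) := by
            have hE' := lemE (t.count 1) (List.replicate ((S t).2) 2)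
            simp only [Nat.add_sub_cancel]
            have e1 : (2 : ℕ) :: (List.replicate (t.count 1) 2 ++
                List.replicate (t.count 1) 1 ++ List.replicate ((S t).2) 2) =
                List.replicate (t.count 1 + 1) 2 ++ List.replicate (t.count 1) 1 ++
                  List.replicate ((S t).2) 2 := by
              simp [List.replicate_succ]
            have e2 : List.replicate (t.count 1) 2 ++ List.replicate (t.count 1) 1 ++
                (2 :: List.replicate ((S t).2) 2) =
                List.replicate (t.count 1) 2 ++ List.replicate (t.count 1) 1 ++
                  List.replicate ((S t).2 + 1) 2 := by
              simp [List.replicate_succ]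
            rw [e1, ← e2]
            exact hE'
          exact hfin
        · -- matched: the new 2 goes to the second row
          have hS : S (2 :: t) = ((S t).1 - 1, (S t).2) := by
            have e : S (2 :: t) = stp 2 (S t) := rfl
            rw [e]; simp [stp, h1]
          have hgoal : canon (2 :: t) = 2 :: canon t := by
            simp only [canon, hS, List.count_cons]
            have e : (t.count 2 + 1) - (S t).2 = (t.count 2 - (S t).2) + 1 := by omega
            simp [e, List.replicate_succ]
          rw [hgoal]
          exact step1
  

end Plactic

open Plactic in
theorem stmt_8 (w : List ℕ) (hw : ∀ x ∈ w, x = 1 ∨ x = 2) :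
    w ∈ Cent [1] ↔ ∀ s : List ℕ, s.IsSuffix w → s.count 2 ≤ s.count 1 := by
  have hmem : w ∈ Cent [1] ↔ KEquiv (1 :: w) (w ++ [1]) := by
    simp [Cent, Set.mem_setOf_eq, List.singleton_append]
  have hov1 : ∀ x ∈ (1 :: w), x = 1 ∨ x = 2 := by
    intro x hx
    rcases List.mem_cons.mp hx with h | h
    · exact Or.inl h
    · exact hw x h
  have hov2 : ∀ x ∈ (w ++ [1]), x = 1 ∨ x = 2 := by
    intro x hx
    rcases List.mem_append.mp hx with h | h
    · exact hw x h
    · simp at h; exact Or.inl h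
  have e1 : S (1 :: w) = ((S w).1 + 1, (S w).2) := by
    have e : S (1 :: w) = stp 1 (S w) := rfl
    rw [e]; simp [stp]
  have e2 : S (w ++ [1]) = w.foldr stp (1, 0) := by
    rw [S_append]
    have : S [1] = (1, 0) := by simp [S, stp]
    rw [this]
  have e3 : w.foldr stp (1, 0) =
      (if (S w).2 = 0 then ((S w).1 + 1, 0) else ((S w).1, (S w).2 - 1)) := by
    have := shiftL w 0
    exact this
  rw [hmem]
  constructor
  · intro h s hs
    have hS := (kequiv_inv h).2 hov1
    rw [e1, e2, e3] at hS
    have h2 : (S w).2 = 0 := by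
      split_ifs at hS with hc
      · exact hc
      · exfalso
        have f1 : (S w).1 + 1 = (S w).1 := congrArg Prod.fst hS
        omega
    have hovs : ∀ x ∈ s, x = 1 ∨ x = 2 := fun x hx => hw x (hs.sublist.subset hx)
    have hids := count_id hovs
    have hles := suffix_m2_le hs
    rw [h2] at hles
    have : (S s).2 = 0 := Nat.le_zero.mp hles
    omega
  · intro hy
    have h2 : (S w).2 = 0 := yam_m2 hw hy
    have c1 := CANON (1 :: w) hov1
    have c2 := CANON (w ++ [1]) hov2
    have hcan : canon (1 :: w) = canon (w ++ [1]) := by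
      have d1 : S (1 :: w) = ((S w).1 + 1, 0) := by rw [e1, h2]
      have d2 : S (w ++ [1]) = ((S w).1 + 1, 0) := by rw [e2, e3, h2]; simp
      have cc1 : (1 :: w : List ℕ).count 1 = w.count 1 + 1 := by simp
      have cc2 : (1 :: w : List ℕ).count 2 = w.count 2 := by simp
      have cc3 : (w ++ [1] : List ℕ).count 1 = w.count 1 + 1 := by simp
      have cc4 : (w ++ [1] : List ℕ).count 2 = w.count 2 := by simp
      simp only [canon, d1, d2, cc1, cc2, cc3, cc4]
    rw [hcan] at c1
    exact c1.trans c2.symm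
end

section
/- The restriction of the Bender-Knuth involution interchanging u and u+1 gives a shape-preserving bijection between the set of semistandard Young tableaux with entries at most m having a u in every column and the set of semistandard Young tableaux with entries at most m having a u+1 in every column, for any 1 ≤ u < m. -/
namespace Plactic

/-- A list of rows is a semistandard Young tableau: nonempty weakly increasing rows of
weakly decreasing lengths, with strictly increasing columns. -/
def IsSSYT (T : List (List ℕ)) : Prop :=
  (∀ r ∈ T, List.Pairwise (· ≤ ·) r) ∧
  (∀ i, (T.getD (i + 1) []).length ≤ (T.getD i []).length) ∧
  (∀ (i j : ℕ) (x y : ℕ), (T.getD i [])[j]? = some x → (T.getD (i + 1) [])[j]? = some y → x < y) ∧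
  (∀ r ∈ T, r ≠ [])

/-- The Bender-Knuth move on a single row `R` with the rows `above` and `below` it:
`u`'s with a `u+1` directly below and `u+1`'s with a `u` directly above are fixed,
and the multiplicities of the remaining free `u`'s and `u+1`'s are interchanged. -/
def bkRow (u : ℕ) (above below R : List ℕ) : List ℕ :=
  let A := R.filter (fun x => decide (x < u))
  let B := R.filter (fun x => decide (u + 1 < x))
  let p := R.count u
  let q := R.count (u + 1)
  let t := ((List.range R.length).filter
      (fun j => decide (R[j]? = some u ∧ below[j]? = some (u + 1)))).length
  let s := ((List.range R.length).filter
      (fun j => decide (R[j]? = some (u + 1) ∧ above[j]? = some u))).length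
  A ++ List.replicate (t + (q - s)) u ++ List.replicate ((p - t) + s) (u + 1) ++ B

/-- The Bender-Knuth involution interchanging `u` and `u+1`, applied row by row. -/
def bk (u : ℕ) (T : List (List ℕ)) : List (List ℕ) :=
  (List.range T.length).map (fun i =>
    bkRow u (if i = 0 then [] else T.getD (i - 1) []) (T.getD (i + 1) []) (T.getD i []))

/-- Semistandard Young tableaux with positive entries at most `m` and an `a` in
every column. -/
def ColSet (m a : ℕ) : Set (List (List ℕ)) :=
  {T | IsSSYT T ∧ (∀ r ∈ T, ∀ x ∈ r, 1 ≤ x ∧ x ≤ m) ∧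
    ∀ j < (T.getD 0 []).length, a ∈ col T j}

end Plactic

namespace Plactic


lemma count_filter_eq_zero {p : ℕ → Bool} {a : ℕ} {l : List ℕ} (h : p a = false) :
    (l.filter p).count a = 0 := by
  rw [List.count_eq_zero]
  intro hm
  rcases List.mem_filter.1 hm with ⟨_, hp⟩
  simp [h] at hp

lemma form_sorted {u p q : ℕ} {A B : List ℕ} (hA : List.Pairwise (· ≤ ·) A)
    (hB : List.Pairwise (· ≤ ·) B) (hAu : ∀ x ∈ A, x < u) (hBu : ∀ x ∈ B, u + 1 < x) :
    List.Pairwise (· ≤ ·) (A ++ List.replicate p u ++ (List.replicate q (u+1) ++ B)) := by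
  rw [List.pairwise_append, List.pairwise_append, List.pairwise_append]
  refine ⟨⟨hA, ⟨List.pairwise_replicate.2 (Or.inr le_rfl), ?_⟩⟩, ⟨⟨List.pairwise_replicate.2 (Or.inr le_rfl), hB, ?_⟩, ?_⟩⟩
  · intro a ha b hb
    rcases List.mem_replicate.1 hb with ⟨_, rfl⟩
    exact (hAu a ha).le
  · intro a ha b hb
    rcases List.mem_replicate.1 ha with ⟨_, rfl⟩
    exact (hBu b hb).le
  · intro a ha b hb
    rcases List.mem_append.1 hb with hb | hb
    · rcases List.mem_replicate.1 hb with ⟨_, rfl⟩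
      rcases List.mem_append.1 ha with ha | ha
      · exact le_of_lt (lt_trans (hAu a ha) (by omega))
      · rcases List.mem_replicate.1 ha with ⟨_, rfl⟩; omega
    · have := hBu b hb
      rcases List.mem_append.1 ha with ha | ha
      · exact le_of_lt (lt_trans (hAu a ha) (by omega))
      · rcases List.mem_replicate.1 ha with ⟨_, rfl⟩; omega

lemma sorted_decomp (u : ℕ) (R : List ℕ) (h : List.Pairwise (· ≤ ·) R) :
    R = R.filter (fun x => decide (x < u)) ++ List.replicate (R.count u) u ++
        (List.replicate (R.count (u+1)) (u+1) ++ R.filter (fun x => decide (u+1 < x))) := by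
  apply List.Perm.eq_of_pairwise' h
    (form_sorted (h.filter _) (h.filter _)
      (fun x hx => by simpa using (List.mem_filter.1 hx).2)
      (fun x hx => by simpa using (List.mem_filter.1 hx).2)) ?_
  rw [List.perm_iff_count]
  intro a
  simp only [List.count_append, List.count_replicate, beq_iff_eq]
  rcases lt_trichotomy a u with h1 | rfl | h1
  · rw [List.count_filter (by simp; omega), count_filter_eq_zero (by simp; omega),
      if_neg (by omega), if_neg (by omega)]
    omega
  · rw [count_filter_eq_zero (by simp), count_filter_eq_zero (by simp),
      if_pos rfl, if_neg (by omega)]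
    omega
  · rcases eq_or_lt_of_le (Nat.succ_le_of_lt h1) with h2 | h2
    · subst h2
      rw [count_filter_eq_zero (by simp), count_filter_eq_zero (by simp),
        if_neg (by omega), if_pos rfl]
      simp [Nat.succ_eq_add_one]
    · rw [count_filter_eq_zero (by simp; omega), List.count_filter (by simp; omega),
        if_neg (by omega), if_neg (by omega)]
      omega



variable {u p q : ℕ} {A B : List ℕ}

lemma form_length :
    (A ++ List.replicate p u ++ (List.replicate q (u+1) ++ B)).length
      = A.length + p + q + B.length := by
  simp; omega

lemma form_get (j : ℕ) :
    (A ++ List.replicate p u ++ (List.replicate q (u+1) ++ B))[j]? =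
      if j < A.length then A[j]?
      else if j < A.length + p then some u
      else if j < A.length + p + q then some (u+1)
      else B[j - (A.length + p + q)]? := by
  simp only [List.getElem?_append, List.getElem?_replicate, List.length_append,
    List.length_replicate]
  split_ifs <;> first | rfl | omega | (exfalso; omega) | (congr 1; omega)

section
variable (hA : ∀ x ∈ A, x < u) (hB : ∀ x ∈ B, u + 1 < x)
include hA hB

lemma form_get_u {j : ℕ} :
    (A ++ List.replicate p u ++ (List.replicate q (u+1) ++ B))[j]? = some u ↔
      A.length ≤ j ∧ j < A.length + p := by
  rw [form_get]
  split_ifs with h1 h2 h3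
  · constructor
    · intro h; exact absurd (hA u (List.mem_of_getElem? h)) (by omega)
    · omega
  · simp; omega
  · simp; omega
  · constructor
    · intro h; exact absurd (hB u (List.mem_of_getElem? h)) (by omega)
    · omega

lemma form_get_u1 {j : ℕ} :
    (A ++ List.replicate p u ++ (List.replicate q (u+1) ++ B))[j]? = some (u+1) ↔
      A.length + p ≤ j ∧ j < A.length + p + q := by
  rw [form_get]
  split_ifs with h1 h2 h3
  · constructor
    · intro h; exact absurd (hA (u+1) (List.mem_of_getElem? h)) (by omega)
    · omega
  · simp; omega
  · simp; omega
  · constructor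
    · intro h; exact absurd (hB (u+1) (List.mem_of_getElem? h)) (by omega)
    · omega

lemma form_get_lt {j x : ℕ}
    (hx : (A ++ List.replicate p u ++ (List.replicate q (u+1) ++ B))[j]? = some x) :
    x < u ↔ j < A.length := by
  rw [form_get] at hx
  split_ifs at hx with h1 h2 h3
  · simp [h1]; exact hA x (List.mem_of_getElem? hx)
  · simp only [Option.some_inj] at hx; omega
  · simp only [Option.some_inj] at hx; omega
  · have := hB x (List.mem_of_getElem? hx); constructor <;> intro <;> omega

lemma form_get_gt {j x : ℕ}
    (hx : (A ++ List.replicate p u ++ (List.replicate q (u+1) ++ B))[j]? = some x) :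
    u + 1 < x ↔ A.length + p + q ≤ j := by
  rw [form_get] at hx
  split_ifs at hx with h1 h2 h3
  · have := hA x (List.mem_of_getElem? hx); constructor <;> intro <;> omega
  · simp only [Option.some_inj] at hx; omega
  · simp only [Option.some_inj] at hx; omega
  · have := hB x (List.mem_of_getElem? hx); simp [this]; omega

end

lemma length_filter_interval {f : ℕ → Bool} :
    ∀ {n c k : ℕ}, (∀ j < n, f j = true ↔ c ≤ j ∧ j < c + k) → (c + k ≤ n ∨ k = 0) →
    ((List.range n).filter f).length = k := by
  intro n
  induction n with
  | zero => intro c k hf hn; simp; omega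
  | succ n ih =>
    intro c k hf hn
    rcases Nat.eq_zero_or_pos k with rfl | hk
    · rw [List.filter_eq_nil_iff.2 (fun j hj => by
        have h2 := hf j (List.mem_range.1 hj)
        cases hfj : f j
        · simp
        · exact absurd (h2.1 hfj) (by omega))]
      rfl
    rw [List.range_succ, List.filter_append, List.length_append]
    rcases Nat.lt_or_ge n (c + k) with h | h
    · have hfn : f n = true := (hf n (by omega)).2 (by omega)
      have : c + (k - 1) ≤ n ∨ k - 1 = 0 := by omega
      rw [ih (c := c) (k := k - 1) (fun j hj => by
        rw [hf j (by omega)]; omega) this]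
      simp [hfn]; omega
    · have hfn : f n = false := by
        cases hfn : f n
        · rfl
        · exact absurd ((hf n (by omega)).1 hfn) (by omega)
      rw [ih (c := c) (k := k) (fun j hj => hf j (by omega)) (by omega)]
      simp [hfn]

lemma length_filter_zero {f : ℕ → Bool} {n : ℕ} (hf : ∀ j < n, f j = false) :
    ((List.range n).filter f).length = 0 := by
  rw [List.filter_eq_nil_iff.2 (fun j hj => by
    have := hf j (List.mem_range.1 hj); simp [this])]
  rfl


variable {T : List (List ℕ)}


lemma getD_beyond (h : T.length ≤ i) : T.getD i [] = [] := by
  rw [List.getD_eq_getElem?_getD, List.getElem?_eq_none h]; rfl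

lemma getD_mem (h : i < T.length) : T.getD i [] ∈ T := by
  rw [List.getD_eq_getElem _ _ h]; exact List.getElem_mem h

lemma mem_getD (h : r ∈ T) : ∃ i < T.length, T.getD i [] = r := by
  rcases List.getElem_of_mem h with ⟨i, hi, hr⟩
  exact ⟨i, hi, by rw [List.getD_eq_getElem _ _ hi, hr]⟩

lemma rows_sorted (hT : IsSSYT T) (i : ℕ) : List.Pairwise (· ≤ ·) (T.getD i []) := by
  rcases Nat.lt_or_ge i T.length with h | h
  · exact hT.1 _ (getD_mem h)
  · rw [getD_beyond h]; exact List.Pairwise.nil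

lemma rows_nonempty (hT : IsSSYT T) (h : i < T.length) : T.getD i [] ≠ [] :=
  hT.2.2.2 _ (getD_mem h)

lemma len_le (hT : IsSSYT T) {i k : ℕ} (h : i ≤ k) :
    (T.getD k []).length ≤ (T.getD i []).length := by
  induction k with
  | zero => cases Nat.le_zero.1 h; exact le_rfl
  | succ n ih =>
    rcases Nat.lt_or_ge i (n+1) with h' | h'
    · exact le_trans (hT.2.1 n) (ih (by omega))
    · have : i = n + 1 := by omega
      subst this; exact le_rfl

lemma row_defined (hT : IsSSYT T) {i k j : ℕ} (hik : i ≤ k)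
    (h : j < (T.getD k []).length) : ∃ x, (T.getD i [])[j]? = some x := by
  have : j < (T.getD i []).length := lt_of_lt_of_le h (len_le hT hik)
  exact ⟨_, List.getElem?_eq_getElem this⟩

lemma row_lt_row (hT : IsSSYT T) {j : ℕ} :
    ∀ {i k y : ℕ}, k < i → (T.getD i [])[j]? = some y →
      ∃ x, (T.getD k [])[j]? = some x ∧ x < y := by
  intro i
  induction i with
  | zero => intro k y h; omega
  | succ n ih =>
    intro k y hk hy
    have hj : j < (T.getD (n+1) []).length := (List.getElem?_eq_some_iff.1 hy).1
    obtain ⟨z, hz⟩ := row_defined hT (Nat.le_succ n) hj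
    have hzy : z < y := hT.2.2.1 n j z y hz hy
    rcases Nat.lt_or_ge k n with h' | h'
    · obtain ⟨x, hx, hxz⟩ := ih h' hz
      exact ⟨x, hx, lt_trans hxz hzy⟩
    · have : k = n := by omega
      subst this; exact ⟨z, hz, hzy⟩

lemma row_le_row (hT : IsSSYT T) {j y i k : ℕ} (hk : k ≤ i)
    (hy : (T.getD i [])[j]? = some y) :
    ∃ x, (T.getD k [])[j]? = some x ∧ x ≤ y := by
  rcases Nat.lt_or_ge k i with h | h
  · obtain ⟨x, hx, hxy⟩ := row_lt_row hT h hy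
    exact ⟨x, hx, hxy.le⟩
  · have : k = i := by omega
    subst this; exact ⟨y, hy, le_rfl⟩

-- row-level lemmas + bk computation, to append inside namespace
section RowLevel
variable {u : ℕ} {R : List ℕ}

lemma filt_lt_mem : ∀ x ∈ R.filter (fun x => decide (x < u)), x < u :=
  fun x hx => by simpa using (List.mem_filter.1 hx).2

lemma filt_gt_mem : ∀ x ∈ R.filter (fun x => decide (u + 1 < x)), u + 1 < x :=
  fun x hx => by simpa using (List.mem_filter.1 hx).2

lemma row_len (h : List.Pairwise (· ≤ ·) R) :
    R.length = (List.filter (fun x => decide (x < u)) R).length + R.count u + R.count (u+1) + (List.filter (fun x => decide (u + 1 < x)) R).length := by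
  conv_lhs => rw [sorted_decomp u R h]
  exact form_length

lemma row_get_u (h : List.Pairwise (· ≤ ·) R) {j : ℕ} :
    R[j]? = some u ↔ (List.filter (fun x => decide (x < u)) R).length ≤ j ∧ j < (List.filter (fun x => decide (x < u)) R).length + R.count u := by
  conv_lhs => rw [sorted_decomp u R h]
  exact form_get_u filt_lt_mem filt_gt_mem

lemma row_get_u1 (h : List.Pairwise (· ≤ ·) R) {j : ℕ} :
    R[j]? = some (u+1) ↔
      (List.filter (fun x => decide (x < u)) R).length + R.count u ≤ j ∧ j < (List.filter (fun x => decide (x < u)) R).length + R.count u + R.count (u+1) := by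
  conv_lhs => rw [sorted_decomp u R h]
  exact form_get_u1 filt_lt_mem filt_gt_mem

lemma row_get_lt (h : List.Pairwise (· ≤ ·) R) {j x : ℕ} (hx : R[j]? = some x) :
    x < u ↔ j < (List.filter (fun x => decide (x < u)) R).length := by
  rw [sorted_decomp u R h] at hx
  exact form_get_lt filt_lt_mem filt_gt_mem hx

lemma row_get_gt (h : List.Pairwise (· ≤ ·) R) {j x : ℕ} (hx : R[j]? = some x) :
    u + 1 < x ↔ (List.filter (fun x => decide (x < u)) R).length + R.count u + R.count (u+1) ≤ j := by
  rw [sorted_decomp u R h] at hx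
  exact form_get_gt filt_lt_mem filt_gt_mem hx

end RowLevel

section BkComp
variable {u : ℕ} {T : List (List ℕ)}

lemma bk_length : (bk u T).length = T.length := by simp [bk]

lemma bk_getD (h : i < T.length) :
    (bk u T).getD i [] =
      bkRow u (if i = 0 then [] else T.getD (i - 1) []) (T.getD (i + 1) []) (T.getD i []) := by
  have h' : i < (bk u T).length := by rwa [bk_length]
  rw [List.getD_eq_getElem _ _ h']
  simp [bk]

lemma bk_getD_beyond (h : T.length ≤ i) : (bk u T).getD i [] = [] :=
  getD_beyond (by rwa [bk_length])

end BkComp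

section FormCount
variable {u p q : ℕ} {A B : List ℕ}
variable (hA : ∀ x ∈ A, x < u) (hB : ∀ x ∈ B, u + 1 < x)
include hA hB

lemma form_count_u : (A ++ List.replicate p u ++ (List.replicate q (u+1) ++ B)).count u = p := by
  have h1 : A.count u = 0 := List.count_eq_zero.2 (fun h => by have := hA u h; omega)
  have h2 : B.count u = 0 := List.count_eq_zero.2 (fun h => by have := hB u h; omega)
  simp [List.count_append, List.count_replicate, h1, h2]

lemma form_count_u1 :
    (A ++ List.replicate p u ++ (List.replicate q (u+1) ++ B)).count (u+1) = q := by
  have h1 : A.count (u+1) = 0 := List.count_eq_zero.2 (fun h => by have := hA _ h; omega)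
  have h2 : B.count (u+1) = 0 := List.count_eq_zero.2 (fun h => by have := hB _ h; omega)
  simp [List.count_append, List.count_replicate, h1, h2]

lemma form_filter_lt :
    (A ++ List.replicate p u ++ (List.replicate q (u+1) ++ B)).filter
      (fun x => decide (x < u)) = A := by
  have h1 : A.filter (fun x => decide (x < u)) = A :=
    List.filter_eq_self.2 (fun x hx => by simp [hA x hx])
  have h2 : (List.replicate p u).filter (fun x => decide (x < u)) = [] :=
    List.filter_eq_nil_iff.2 (fun x hx => by
      rcases List.mem_replicate.1 hx with ⟨_, rfl⟩; simp)
  have h3 : (List.replicate q (u+1)).filter (fun x => decide (x < u)) = [] :=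
    List.filter_eq_nil_iff.2 (fun x hx => by
      rcases List.mem_replicate.1 hx with ⟨_, rfl⟩; simp)
  have h4 : B.filter (fun x => decide (x < u)) = [] :=
    List.filter_eq_nil_iff.2 (fun x hx => by have := hB x hx; simp; omega)
  simp [List.filter_append, h1, h2, h3, h4]

lemma form_filter_gt :
    (A ++ List.replicate p u ++ (List.replicate q (u+1) ++ B)).filter
      (fun x => decide (u + 1 < x)) = B := by
  have h1 : A.filter (fun x => decide (u + 1 < x)) = [] :=
    List.filter_eq_nil_iff.2 (fun x hx => by have := hA x hx; simp; omega)
  have h2 : (List.replicate p u).filter (fun x => decide (u + 1 < x)) = [] :=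
    List.filter_eq_nil_iff.2 (fun x hx => by
      rcases List.mem_replicate.1 hx with ⟨_, rfl⟩; simp)
  have h3 : (List.replicate q (u+1)).filter (fun x => decide (u + 1 < x)) = [] :=
    List.filter_eq_nil_iff.2 (fun x hx => by
      rcases List.mem_replicate.1 hx with ⟨_, rfl⟩; simp)
  have h4 : B.filter (fun x => decide (u + 1 < x)) = B :=
    List.filter_eq_self.2 (fun x hx => by simp [hB x hx])
  simp [List.filter_append, h1, h2, h3, h4]

end FormCount

lemma bkRow_def (u : ℕ) (above below R : List ℕ) :
    bkRow u above below R =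
      R.filter (fun x => decide (x < u)) ++
      List.replicate
        ((((List.range R.length).filter
          (fun j => decide (R[j]? = some u ∧ below[j]? = some (u + 1)))).length)
          + (R.count (u+1) -
            (((List.range R.length).filter
              (fun j => decide (R[j]? = some (u + 1) ∧ above[j]? = some u))).length))) u ++
      (List.replicate
        ((R.count u -
          (((List.range R.length).filter
            (fun j => decide (R[j]? = some u ∧ below[j]? = some (u + 1)))).length))
          + (((List.range R.length).filter
            (fun j => decide (R[j]? = some (u + 1) ∧ above[j]? = some u))).length)) (u+1) ++
       R.filter (fun x => decide (u + 1 < x))) := by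
  rw [bkRow]
  rw [List.append_assoc]

section DirOne
variable {m u : ℕ} {T : List (List ℕ)}

lemma colset_E1 (hT : T ∈ ColSet m u) {i j : ℕ}
    (h : (T.getD i [])[j]? = some (u+1)) :
    1 ≤ i ∧ (T.getD (i-1) [])[j]? = some u := by
  obtain ⟨hS, hb, hcol⟩ := hT
  have hj : j < (T.getD i []).length := (List.getElem?_eq_some_iff.1 h).1
  have hj0 : j < (T.getD 0 []).length := lt_of_lt_of_le hj (len_le hS (Nat.zero_le i))
  obtain ⟨r, hrT, hru⟩ := List.mem_filterMap.1 (hcol j hj0)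
  obtain ⟨k, hk, rfl⟩ := mem_getD hrT
  have hki : k < i := by
    rcases Nat.lt_trichotomy k i with h' | rfl | h'
    · exact h'
    · rw [h] at hru; exact absurd (Option.some_inj.1 hru) (by omega)
    · obtain ⟨x, hx, hxlt⟩ := row_lt_row hS h' hru
      rw [h] at hx; have := Option.some_inj.1 hx; omega
  refine ⟨by omega, ?_⟩
  obtain ⟨x, hx⟩ := row_defined hS (show i - 1 ≤ i by omega) hj
  obtain ⟨z, hz, hzx⟩ := row_le_row hS (show k ≤ i - 1 by omega) hx
  rw [hru] at hz
  have hzu : z = u := (Option.some_inj.1 hz).symm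
  have hlt : x < u + 1 := by
    have hi1 : i - 1 + 1 = i := by omega
    exact hS.2.2.1 (i-1) j x (u+1) hx (by rwa [hi1])
  have : x = u := by omega
  rwa [this] at hx

lemma colset_q0 (hT : T ∈ ColSet m u) : (T.getD 0 []).count (u+1) = 0 := by
  by_contra h
  have hm : (u+1) ∈ T.getD 0 [] := List.count_pos_iff.1 (Nat.pos_of_ne_zero h)
  obtain ⟨j, hj, he⟩ := List.getElem_of_mem hm
  have := (colset_E1 hT (i := 0) (j := j) (by rw [List.getElem?_eq_getElem hj, he])).1
  omega

lemma colset_E2 (hT : T ∈ ColSet m u) (i : ℕ) :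
    (T.getD (i+1) []).count (u+1) ≤ (T.getD i []).count u ∧
    ((T.getD (i+1) []).count (u+1) ≠ 0 →
      (List.filter (fun x => decide (x < u)) (T.getD (i+1) [])).length + (T.getD (i+1) []).count u = (List.filter (fun x => decide (x < u)) (T.getD i [])).length) := by
  have hS := hT.1
  set R := T.getD i [] with hR
  set S := T.getD (i+1) [] with hSdef
  by_cases hq : S.count (u+1) = 0
  · exact ⟨by omega, fun h => absurd hq h⟩
  have hsortS : List.Pairwise (· ≤ ·) S := rows_sorted hS (i+1)
  have hsortR : List.Pairwise (· ≤ ·) R := rows_sorted hS i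
  have h1 : S[(List.filter (fun x => decide (x < u)) S).length + S.count u]? = some (u+1) :=
    (row_get_u1 hsortS).2 ⟨le_rfl, by omega⟩
  have h2 : S[(List.filter (fun x => decide (x < u)) S).length + S.count u + S.count (u+1) - 1]? = some (u+1) :=
    (row_get_u1 hsortS).2 ⟨by omega, by omega⟩
  have e1 := (colset_E1 hT h1).2
  have e2 := (colset_E1 hT h2).2
  simp only [Nat.add_sub_cancel] at e1 e2
  rw [← hR] at e1 e2
  have f1 := (row_get_u hsortR).1 e1
  have f2 := (row_get_u hsortR).1 e2
  constructor
  · omega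
  intro _
  -- show alignment: suffices c ≤ (List.filter (fun x => decide (x < u)) R).length
  have hca : (List.filter (fun x => decide (x < u)) S).length + S.count u ≤ (List.filter (fun x => decide (x < u)) R).length := by
    by_contra hca
    push_neg at hca
    set c := (List.filter (fun x => decide (x < u)) S).length + S.count u with hc
    have hclen : c < S.length := (List.getElem?_eq_some_iff.1 h1).1
    have hj0 : c - 1 < S.length := by omega
    obtain ⟨y, hy⟩ : ∃ y, S[c-1]? = some y := ⟨_, List.getElem?_eq_getElem hj0⟩
    have hyne : ¬ (u + 1 < y) := by
      rw [row_get_gt hsortS hy]; omega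
    have hyne2 : y ≠ u + 1 := by
      intro h'
      have := (row_get_u1 hsortS).1 (h' ▸ hy)
      omega
    have hylt : y < u + 1 := by omega
    have hjR : c - 1 < R.length := lt_of_lt_of_le hj0 (len_le hS (Nat.le_succ i))
    obtain ⟨x, hx⟩ : ∃ x, R[c-1]? = some x := ⟨_, List.getElem?_eq_getElem hjR⟩
    have hxy : x < y := hS.2.2.1 i (c-1) x y hx hy
    have : x < u := by omega
    rw [row_get_lt hsortR hx] at this
    omega
  omega

lemma colset_t (hT : T ∈ ColSet m u) (i : ℕ) :
    ((List.range (T.getD i []).length).filter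
      (fun j => decide ((T.getD i [])[j]? = some u ∧ (T.getD (i+1) [])[j]? = some (u+1)))).length
      = (T.getD (i+1) []).count (u+1) := by
  have hS := hT.1
  have hsortS : List.Pairwise (· ≤ ·) (T.getD (i+1) []) := rows_sorted hS (i+1)
  apply length_filter_interval
    (c := (List.filter (fun x => decide (x < u)) (T.getD (i+1) [])).length + (T.getD (i+1) []).count u)
  · intro j hj
    rw [decide_eq_true_eq]
    constructor
    · rintro ⟨_, h2⟩; exact (row_get_u1 hsortS).1 h2
    · intro hcr
      have h2 := (row_get_u1 hsortS).2 hcr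
      have h1 := (colset_E1 hT h2).2
      simp only [Nat.add_sub_cancel] at h1
      exact ⟨h1, h2⟩
  · by_cases hq : (T.getD (i+1) []).count (u+1) = 0
    · exact Or.inr hq
    · left
      obtain ⟨hle, hal⟩ := colset_E2 hT i
      rw [hal hq]
      have := row_len (u := u) (rows_sorted hS i)
      omega

lemma colset_s (hT : T ∈ ColSet m u) (i : ℕ) :
    ((List.range (T.getD i []).length).filter
      (fun j => decide ((T.getD i [])[j]? = some (u+1) ∧
        (if i = 0 then [] else T.getD (i-1) [])[j]? = some u))).length
      = (T.getD i []).count (u+1) := by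
  have hS := hT.1
  have hsort : List.Pairwise (· ≤ ·) (T.getD i []) := rows_sorted hS i
  rcases Nat.eq_zero_or_pos i with rfl | hi
  · rw [colset_q0 hT]
    apply length_filter_zero
    intro j hj
    simp
  · apply length_filter_interval (c := (List.filter (fun x => decide (x < u)) (T.getD i [])).length + (T.getD i []).count u)
    · intro j hj
      rw [decide_eq_true_eq, if_neg (by omega)]
      constructor
      · rintro ⟨h1, _⟩; exact (row_get_u1 hsort).1 h1
      · intro hcr
        have h1 := (row_get_u1 hsort).2 hcr
        exact ⟨h1, (colset_E1 hT h1).2⟩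
    · left
      have := row_len (u := u) hsort
      omega

lemma bk_row_eq (hT : T ∈ ColSet m u) {i : ℕ} (hi : i < T.length) :
    (bk u T).getD i [] =
      (T.getD i []).filter (fun x => decide (x < u)) ++
      List.replicate ((T.getD (i+1) []).count (u+1)) u ++
      (List.replicate (((T.getD i []).count u - (T.getD (i+1) []).count (u+1))
          + (T.getD i []).count (u+1)) (u+1) ++
       (T.getD i []).filter (fun x => decide (u+1 < x))) := by
  rw [bk_getD hi, bkRow_def, colset_t hT i, colset_s hT i]
  simp [Nat.sub_self]

lemma new_sorted (hT : T ∈ ColSet m u) {i : ℕ} (hi : i < T.length) :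
    List.Pairwise (· ≤ ·) ((bk u T).getD i []) := by
  rw [bk_row_eq hT hi]
  exact form_sorted ((rows_sorted hT.1 i).filter _) ((rows_sorted hT.1 i).filter _)
    filt_lt_mem filt_gt_mem

lemma new_len (hT : T ∈ ColSet m u) (i : ℕ) :
    ((bk u T).getD i []).length = (T.getD i []).length := by
  rcases Nat.lt_or_ge i T.length with h | h
  · rw [bk_row_eq hT h, form_length]
    have h1 := (colset_E2 hT i).1
    have h2 := row_len (u := u) (rows_sorted hT.1 i)
    omega
  · rw [bk_getD_beyond h, getD_beyond h]

lemma new_get_u (hT : T ∈ ColSet m u) {i : ℕ} (hi : i < T.length) {j : ℕ} :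
    ((bk u T).getD i [])[j]? = some u ↔
      (List.filter (fun x => decide (x < u)) (T.getD i [])).length ≤ j ∧
      j < (List.filter (fun x => decide (x < u)) (T.getD i [])).length
          + (T.getD (i+1) []).count (u+1) := by
  rw [bk_row_eq hT hi]
  exact form_get_u filt_lt_mem filt_gt_mem

lemma new_get_u1 (hT : T ∈ ColSet m u) {i : ℕ} (hi : i < T.length) {j : ℕ} :
    ((bk u T).getD i [])[j]? = some (u+1) ↔
      (List.filter (fun x => decide (x < u)) (T.getD i [])).length
        + (T.getD (i+1) []).count (u+1) ≤ j ∧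
      j < (List.filter (fun x => decide (x < u)) (T.getD i [])).length
          + (T.getD (i+1) []).count (u+1)
          + (((T.getD i []).count u - (T.getD (i+1) []).count (u+1)) + (T.getD i []).count (u+1)) := by
  rw [bk_row_eq hT hi]
  exact form_get_u1 filt_lt_mem filt_gt_mem

lemma new_get_lt (hT : T ∈ ColSet m u) {i : ℕ} (hi : i < T.length) {j x : ℕ}
    (hx : ((bk u T).getD i [])[j]? = some x) :
    x < u ↔ j < (List.filter (fun x => decide (x < u)) (T.getD i [])).length := by
  rw [bk_row_eq hT hi] at hx
  exact form_get_lt filt_lt_mem filt_gt_mem hx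

lemma new_get_gt (hT : T ∈ ColSet m u) {i : ℕ} (hi : i < T.length) {j x : ℕ}
    (hx : ((bk u T).getD i [])[j]? = some x) :
    u + 1 < x ↔
      (List.filter (fun x => decide (x < u)) (T.getD i [])).length
        + (T.getD (i+1) []).count (u+1)
        + (((T.getD i []).count u - (T.getD (i+1) []).count (u+1)) + (T.getD i []).count (u+1)) ≤ j := by
  rw [bk_row_eq hT hi] at hx
  exact form_get_gt filt_lt_mem filt_gt_mem hx

lemma agree_outside (hT : T ∈ ColSet m u) {i : ℕ} (hi : i < T.length) {j : ℕ}
    (h : j < (List.filter (fun x => decide (x < u)) (T.getD i [])).length ∨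
      (List.filter (fun x => decide (x < u)) (T.getD i [])).length
        + (T.getD i []).count u + (T.getD i []).count (u+1) ≤ j) :
    ((bk u T).getD i [])[j]? = (T.getD i [])[j]? := by
  have hq := (colset_E2 hT i).1
  rw [bk_row_eq hT hi]
  conv_rhs => rw [sorted_decomp u _ (rows_sorted hT.1 i)]
  rw [form_get, form_get]
  split_ifs <;> first | rfl | omega | (congr 1; omega)

lemma q_pos_lt (hT : T ∈ ColSet m u) {i : ℕ} (h : (T.getD i []).count (u+1) ≠ 0) :
    i < T.length := by
  by_contra h'
  rw [getD_beyond (by omega)] at h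
  simp at h

lemma dir1_mapsTo (hu : 1 ≤ u) (hum : u < m) (hT : T ∈ ColSet m u) : bk u T ∈ ColSet m (u+1) := by
  have hS := hT.1
  have hlen : ∀ i, ((bk u T).getD i []).length = (T.getD i []).length := new_len hT
  refine ⟨⟨?_, ?_, ?_, ?_⟩, ?_, ?_⟩
  · -- rows sorted
    intro r hr
    obtain ⟨i, hi, rfl⟩ := mem_getD hr
    rw [bk_length] at hi
    exact new_sorted hT hi
  · -- lengths decreasing
    intro i
    rw [hlen, hlen]
    exact hS.2.1 i
  · -- columns strict
    intro i j x y hx hy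
    have hjy : j < ((bk u T).getD (i+1) []).length := (List.getElem?_eq_some_iff.1 hy).1
    have hi1 : i + 1 < T.length := by
      by_contra h
      rw [bk_getD_beyond (by omega)] at hjy
      simp at hjy
    have hi : i < T.length := by omega
    have hj1 : j < (T.getD (i+1) []).length := by rwa [hlen] at hjy
    obtain ⟨x0, hx0⟩ := row_defined hS (Nat.le_succ i) hj1
    obtain ⟨y0, hy0⟩ : ∃ y0, (T.getD (i+1) [])[j]? = some y0 :=
      ⟨_, List.getElem?_eq_getElem hj1⟩
    have hxy0 : x0 < y0 := hS.2.2.1 i j x0 y0 hx0 hy0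
    -- abbreviations
    have hE2 := colset_E2 hT i
    have hE2' := colset_E2 hT (i+1)
    have hlenR := row_len (u := u) (rows_sorted hS i)
    have hlenS := row_len (u := u) (rows_sorted hS (i+1))
    by_cases h1 : j < (List.filter (fun x => decide (x < u)) (T.getD i [])).length
    · have hxx0 : x = x0 := by
        have := agree_outside hT hi (j := j) (Or.inl h1)
        rw [hx, hx0] at this; exact Option.some_inj.1 this
      have hxu : x0 < u := (row_get_lt (rows_sorted hS i) hx0).2 h1
      by_cases h2 : j < (List.filter (fun x => decide (x < u)) (T.getD (i+1) [])).length
      · have hyy0 : y = y0 := by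
          have := agree_outside hT hi1 (j := j) (Or.inl h2)
          rw [hy, hy0] at this; exact Option.some_inj.1 this
        omega
      · have : ¬ (y < u) := by rw [new_get_lt hT hi1 hy]; omega
        omega
    push_neg at h1
    by_cases h2 : j < (List.filter (fun x => decide (x < u)) (T.getD i [])).length
        + (T.getD (i+1) []).count (u+1)
    · -- x = u, y = u + 1
      have hxu : x = u := by
        have := (new_get_u hT hi (j := j)).2 ⟨h1, h2⟩
        rw [hx] at this; exact Option.some_inj.1 this
      have hq1 : (T.getD (i+1) []).count (u+1) ≠ 0 := by omega
      have hal := hE2.2 hq1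
      have hyu1 : ((bk u T).getD (i+1) [])[j]? = some (u+1) := by
        refine (new_get_u1 hT hi1 (j := j)).2 ⟨by omega, by omega⟩
      rw [hy] at hyu1
      have : y = u + 1 := Option.some_inj.1 hyu1
      omega
    push_neg at h2
    by_cases h3 : j < (List.filter (fun x => decide (x < u)) (T.getD i [])).length
        + (T.getD i []).count u + (T.getD i []).count (u+1)
    · -- x = u + 1
      have hxu1 : x = u + 1 := by
        have := (new_get_u1 hT hi (j := j)).2 ⟨by omega, by omega⟩
        rw [hx] at this; exact Option.some_inj.1 this
      have hjbig : (List.filter (fun x => decide (x < u)) (T.getD (i+1) [])).length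
          + (T.getD (i+1) []).count u + (T.getD (i+1) []).count (u+1) ≤ j := by
        by_contra hlt
        push_neg at hlt
        have hx0l : ¬ (x0 < u) := by rw [row_get_lt (rows_sorted hS i) hx0]; omega
        have hx0h : ¬ (u + 1 < x0) := by rw [row_get_gt (rows_sorted hS i) hx0]; omega
        have hy0ge : u + 1 ≤ y0 := by omega
        have hy0h : ¬ (u + 1 < y0) := by rw [row_get_gt (rows_sorted hS (i+1)) hy0]; omega
        have hy0e : y0 = u + 1 := by omega
        have hmem := (row_get_u1 (rows_sorted hS (i+1))).1 (hy0e ▸ hy0)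
        have hq1 : (T.getD (i+1) []).count (u+1) ≠ 0 := by omega
        have hal := hE2.2 hq1
        omega
      have hyy0 : y = y0 := by
        have := agree_outside hT hi1 (j := j) (Or.inr hjbig)
        rw [hy, hy0] at this; exact Option.some_inj.1 this
      have : u + 1 < y0 := (row_get_gt (rows_sorted hS (i+1)) hy0).2 hjbig
      omega
    · push_neg at h3
      have hxx0 : x = x0 := by
        have := agree_outside hT hi (j := j) (Or.inr h3)
        rw [hx, hx0] at this; exact Option.some_inj.1 this
      have hgt : u + 1 < x0 := (row_get_gt (rows_sorted hS i) hx0).2 h3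
      have hy0gt : u + 1 < y0 := by omega
      have hjbig := (row_get_gt (rows_sorted hS (i+1)) hy0).1 hy0gt
      have hyy0 : y = y0 := by
        have := agree_outside hT hi1 (j := j) (Or.inr hjbig)
        rw [hy, hy0] at this; exact Option.some_inj.1 this
      omega
  · -- rows nonempty
    intro r hr
    obtain ⟨i, hi, rfl⟩ := mem_getD hr
    rw [bk_length] at hi
    intro hnil
    have := hlen i
    rw [hnil] at this
    have hne := rows_nonempty hS hi
    have : (T.getD i []).length = 0 := by simpa using this.symm
    exact hne (List.length_eq_zero_iff.1 this)
  · -- entry bounds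
    intro r hr x hxr
    obtain ⟨i, hi, rfl⟩ := mem_getD hr
    rw [bk_length] at hi
    rw [bk_row_eq hT hi] at hxr
    have hb := hT.2.1
    rcases List.mem_append.1 hxr with hx1 | hx1
    · rcases List.mem_append.1 hx1 with hx2 | hx2
      · exact hb _ (getD_mem hi) x (List.mem_of_mem_filter hx2)
      · rcases List.mem_replicate.1 hx2 with ⟨_, rfl⟩; omega
    · rcases List.mem_append.1 hx1 with hx2 | hx2
      · rcases List.mem_replicate.1 hx2 with ⟨_, rfl⟩; omega
      · exact hb _ (getD_mem hi) x (List.mem_of_mem_filter hx2)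
  · -- every column contains u+1
    intro j hj
    rw [hlen 0] at hj
    obtain ⟨r, hrT, hru⟩ := List.mem_filterMap.1 (hT.2.2 j hj)
    obtain ⟨i, hi, rfl⟩ := mem_getD hrT
    have hiu := (row_get_u (rows_sorted hS i)).1 hru
    have hE2 := colset_E2 hT i
    have hE2' := colset_E2 hT (i+1)
    by_cases hcase : j < (List.filter (fun x => decide (x < u)) (T.getD i [])).length
        + (T.getD (i+1) []).count (u+1)
    · have hq1 : (T.getD (i+1) []).count (u+1) ≠ 0 := by omega
      have hal := hE2.2 hq1
      have hi1 : i + 1 < T.length := q_pos_lt hT hq1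
      have hval : ((bk u T).getD (i+1) [])[j]? = some (u+1) :=
        (new_get_u1 hT hi1 (j := j)).2 ⟨by omega, by omega⟩
      exact List.mem_filterMap.2 ⟨_, getD_mem (by rw [bk_length]; exact hi1), hval⟩
    · have hval : ((bk u T).getD i [])[j]? = some (u+1) :=
        (new_get_u1 hT hi (j := j)).2 ⟨by omega, by omega⟩
      exact List.mem_filterMap.2 ⟨_, getD_mem (by rw [bk_length]; exact hi), hval⟩

lemma dir1_shape (hT : T ∈ ColSet m u) :
    (bk u T).map List.length = T.map List.length := by
  apply List.ext_getElem
  · simp [bk_length]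
  · intro i h1 h2
    simp only [List.getElem_map]
    have hi : i < T.length := by simpa using h2
    have hi' : i < (bk u T).length := by rwa [bk_length]
    rw [← List.getD_eq_getElem (bk u T) [] hi', ← List.getD_eq_getElem T [] hi]
    exact new_len hT i

end DirOne

section DirTwo
variable {m u : ℕ} {T : List (List ℕ)}

lemma colset2_E1 (hT : T ∈ ColSet m (u+1)) {i j : ℕ}
    (h : (T.getD i [])[j]? = some u) :
    (T.getD (i+1) [])[j]? = some (u+1) := by
  obtain ⟨hS, hb, hcol⟩ := hT
  have hj : j < (T.getD i []).length := (List.getElem?_eq_some_iff.1 h).1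
  have hj0 : j < (T.getD 0 []).length := lt_of_lt_of_le hj (len_le hS (Nat.zero_le i))
  obtain ⟨r, hrT, hru⟩ := List.mem_filterMap.1 (hcol j hj0)
  obtain ⟨k, hk, rfl⟩ := mem_getD hrT
  have hik : i < k := by
    rcases Nat.lt_trichotomy k i with h' | rfl | h'
    · obtain ⟨x, hx, hxlt⟩ := row_lt_row hS h' h
      rw [hru] at hx; have := Option.some_inj.1 hx; omega
    · rw [h] at hru; have := Option.some_inj.1 hru; omega
    · exact h'
  obtain ⟨y, hy, hyle⟩ := row_le_row hS (show i + 1 ≤ k by omega) hru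
  have hlt : u < y := hS.2.2.1 i j u y h hy
  have : y = u + 1 := by omega
  rwa [this] at hy

lemma colset2_t (hT : T ∈ ColSet m (u+1)) (i : ℕ) :
    ((List.range (T.getD i []).length).filter
      (fun j => decide ((T.getD i [])[j]? = some u ∧ (T.getD (i+1) [])[j]? = some (u+1)))).length
      = (T.getD i []).count u := by
  have hS := hT.1
  have hsort : List.Pairwise (· ≤ ·) (T.getD i []) := rows_sorted hS i
  apply length_filter_interval (c := (List.filter (fun x => decide (x < u)) (T.getD i [])).length)
  · intro j hj
    rw [decide_eq_true_eq]
    constructor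
    · rintro ⟨h1, _⟩; exact (row_get_u hsort).1 h1
    · intro hcr
      have h1 := (row_get_u hsort).2 hcr
      exact ⟨h1, colset2_E1 hT h1⟩
  · left
    have := row_len (u := u) hsort
    omega

lemma colset2_E2 (hT : T ∈ ColSet m (u+1)) (i : ℕ) :
    (T.getD i []).count u ≤ (T.getD (i+1) []).count (u+1) ∧
    ((T.getD i []).count u ≠ 0 →
      (List.filter (fun x => decide (x < u)) (T.getD i [])).length + (T.getD i []).count u =
      (List.filter (fun x => decide (x < u)) (T.getD (i+1) [])).length
        + (T.getD (i+1) []).count u + (T.getD (i+1) []).count (u+1)) := by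
  have hS := hT.1
  by_cases hp : (T.getD i []).count u = 0
  · exact ⟨by omega, fun h => absurd hp h⟩
  have hsortR : List.Pairwise (· ≤ ·) (T.getD i []) := rows_sorted hS i
  have hsortS : List.Pairwise (· ≤ ·) (T.getD (i+1) []) := rows_sorted hS (i+1)
  have h1 : (T.getD i [])[(List.filter (fun x => decide (x < u)) (T.getD i [])).length]? = some u :=
    (row_get_u hsortR).2 ⟨le_rfl, by omega⟩
  have h2 : (T.getD i [])[(List.filter (fun x => decide (x < u)) (T.getD i [])).length
      + (T.getD i []).count u - 1]? = some u :=
    (row_get_u hsortR).2 ⟨by omega, by omega⟩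
  have e1 := (row_get_u1 hsortS).1 (colset2_E1 hT h1)
  have e2 := (row_get_u1 hsortS).1 (colset2_E1 hT h2)
  constructor
  · omega
  intro _
  -- end alignment
  have hend : (List.filter (fun x => decide (x < u)) (T.getD (i+1) [])).length
      + (T.getD (i+1) []).count u + (T.getD (i+1) []).count (u+1)
      ≤ (List.filter (fun x => decide (x < u)) (T.getD i [])).length + (T.getD i []).count u := by
    by_contra hca
    push_neg at hca
    set e := (List.filter (fun x => decide (x < u)) (T.getD i [])).length + (T.getD i []).count u
      with he
    have hlenS := row_len (u := u) hsortS
    have helen : e < (T.getD (i+1) []).length := by omega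
    obtain ⟨y, hy⟩ : ∃ y, (T.getD (i+1) [])[e]? = some y := ⟨_, List.getElem?_eq_getElem helen⟩
    have hyle : ¬ (u + 1 < y) := by rw [row_get_gt hsortS hy]; omega
    have heR : e < (T.getD i []).length := lt_of_lt_of_le helen (len_le hS (Nat.le_succ i))
    obtain ⟨x, hx⟩ : ∃ x, (T.getD i [])[e]? = some x := ⟨_, List.getElem?_eq_getElem heR⟩
    have hxge : ¬ (x < u) := by rw [row_get_lt hsortR hx]; omega
    have hxne : x ≠ u := by
      intro h'
      have := (row_get_u hsortR).1 (h' ▸ hx)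
      omega
    have hxy : x < y := hS.2.2.1 i e x y hx hy
    omega
  omega

lemma colset2_s (hT : T ∈ ColSet m (u+1)) (i : ℕ) :
    ((List.range (T.getD i []).length).filter
      (fun j => decide ((T.getD i [])[j]? = some (u+1) ∧
        (if i = 0 then [] else T.getD (i-1) [])[j]? = some u))).length
      = (if i = 0 then 0 else (T.getD (i-1) []).count u) := by
  have hS := hT.1
  rcases Nat.eq_zero_or_pos i with rfl | hi
  · simp only [if_pos rfl]
    apply length_filter_zero
    intro j hj
    simp
  · simp only [if_neg (show ¬ i = 0 by omega)]
    have hi1 : i - 1 + 1 = i := by omega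
    have hsort : List.Pairwise (· ≤ ·) (T.getD (i-1) []) := rows_sorted hS (i-1)
    apply length_filter_interval (c := (List.filter (fun x => decide (x < u)) (T.getD (i-1) [])).length)
    · intro j hj
      rw [decide_eq_true_eq]
      constructor
      · rintro ⟨_, h2⟩; exact (row_get_u hsort).1 h2
      · intro hcr
        have h2 := (row_get_u hsort).2 hcr
        have h1 := colset2_E1 hT h2
        rw [hi1] at h1
        exact ⟨h1, h2⟩
    · by_cases hp : (T.getD (i-1) []).count u = 0
      · exact Or.inr hp
      · left
        have hE2 := (colset2_E2 hT (i-1)).2 hp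
        rw [hi1] at hE2
        have := row_len (u := u) (rows_sorted hS i)
        omega

lemma bk2_row_eq (hT : T ∈ ColSet m (u+1)) {i : ℕ} (hi : i < T.length) :
    (bk u T).getD i [] =
      (T.getD i []).filter (fun x => decide (x < u)) ++
      List.replicate ((T.getD i []).count u +
        ((T.getD i []).count (u+1) - (if i = 0 then 0 else (T.getD (i-1) []).count u))) u ++
      (List.replicate (if i = 0 then 0 else (T.getD (i-1) []).count u) (u+1) ++
       (T.getD i []).filter (fun x => decide (u+1 < x))) := by
  rw [bk_getD hi, bkRow_def, colset2_t hT i, colset2_s hT i]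
  simp [Nat.sub_self]

lemma prevp_le (hT : T ∈ ColSet m (u+1)) (i : ℕ) :
    (if i = 0 then 0 else (T.getD (i-1) []).count u) ≤ (T.getD i []).count (u+1) := by
  rcases Nat.eq_zero_or_pos i with rfl | hi
  · simp
  · rw [if_neg (by omega)]
    have := (colset2_E2 hT (i-1)).1
    have hi1 : i - 1 + 1 = i := by omega
    rwa [hi1] at this

end DirTwo

section DirTwoMain
variable {m u : ℕ} {T : List (List ℕ)}

lemma cnt_pos_lt {v i : ℕ} (h : (T.getD i []).count v ≠ 0) : i < T.length := by
  by_contra h'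
  rw [getD_beyond (by omega)] at h
  simp at h

lemma prevp_succ (i : ℕ) :
    (if i + 1 = 0 then ([] : List ℕ) else T.getD (i+1-1) []) = T.getD i [] := by
  simp

lemma new2_sorted (hT : T ∈ ColSet m (u+1)) {i : ℕ} (hi : i < T.length) :
    List.Pairwise (· ≤ ·) ((bk u T).getD i []) := by
  rw [bk2_row_eq hT hi]
  exact form_sorted ((rows_sorted hT.1 i).filter _) ((rows_sorted hT.1 i).filter _)
    filt_lt_mem filt_gt_mem

lemma new2_len (hT : T ∈ ColSet m (u+1)) (i : ℕ) :
    ((bk u T).getD i []).length = (T.getD i []).length := by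
  rcases Nat.lt_or_ge i T.length with h | h
  · rw [bk2_row_eq hT h, form_length]
    have h1 := prevp_le hT i
    have h2 := row_len (u := u) (rows_sorted hT.1 i)
    omega
  · rw [bk_getD_beyond h, getD_beyond h]

lemma new2_get_u (hT : T ∈ ColSet m (u+1)) {i : ℕ} (hi : i < T.length) {j : ℕ} :
    ((bk u T).getD i [])[j]? = some u ↔
      (List.filter (fun x => decide (x < u)) (T.getD i [])).length ≤ j ∧
      j < (List.filter (fun x => decide (x < u)) (T.getD i [])).length
          + ((T.getD i []).count u +
            ((T.getD i []).count (u+1) - (if i = 0 then 0 else (T.getD (i-1) []).count u))) := by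
  rw [bk2_row_eq hT hi]
  exact form_get_u filt_lt_mem filt_gt_mem

lemma new2_get_u1 (hT : T ∈ ColSet m (u+1)) {i : ℕ} (hi : i < T.length) {j : ℕ} :
    ((bk u T).getD i [])[j]? = some (u+1) ↔
      (List.filter (fun x => decide (x < u)) (T.getD i [])).length
        + ((T.getD i []).count u +
          ((T.getD i []).count (u+1) - (if i = 0 then 0 else (T.getD (i-1) []).count u))) ≤ j ∧
      j < (List.filter (fun x => decide (x < u)) (T.getD i [])).length
          + ((T.getD i []).count u +
            ((T.getD i []).count (u+1) - (if i = 0 then 0 else (T.getD (i-1) []).count u)))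
          + (if i = 0 then 0 else (T.getD (i-1) []).count u) := by
  rw [bk2_row_eq hT hi]
  exact form_get_u1 filt_lt_mem filt_gt_mem

lemma new2_get_lt (hT : T ∈ ColSet m (u+1)) {i : ℕ} (hi : i < T.length) {j x : ℕ}
    (hx : ((bk u T).getD i [])[j]? = some x) :
    x < u ↔ j < (List.filter (fun x => decide (x < u)) (T.getD i [])).length := by
  rw [bk2_row_eq hT hi] at hx
  exact form_get_lt filt_lt_mem filt_gt_mem hx

lemma new2_get_gt (hT : T ∈ ColSet m (u+1)) {i : ℕ} (hi : i < T.length) {j x : ℕ}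
    (hx : ((bk u T).getD i [])[j]? = some x) :
    u + 1 < x ↔
      (List.filter (fun x => decide (x < u)) (T.getD i [])).length
        + ((T.getD i []).count u +
          ((T.getD i []).count (u+1) - (if i = 0 then 0 else (T.getD (i-1) []).count u)))
        + (if i = 0 then 0 else (T.getD (i-1) []).count u) ≤ j := by
  rw [bk2_row_eq hT hi] at hx
  exact form_get_gt filt_lt_mem filt_gt_mem hx

lemma agree2_outside (hT : T ∈ ColSet m (u+1)) {i : ℕ} (hi : i < T.length) {j : ℕ}
    (h : j < (List.filter (fun x => decide (x < u)) (T.getD i [])).length ∨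
      (List.filter (fun x => decide (x < u)) (T.getD i [])).length
        + (T.getD i []).count u + (T.getD i []).count (u+1) ≤ j) :
    ((bk u T).getD i [])[j]? = (T.getD i [])[j]? := by
  have hq := prevp_le hT i
  rw [bk2_row_eq hT hi]
  conv_rhs => rw [sorted_decomp u _ (rows_sorted hT.1 i)]
  rw [form_get, form_get]
  rcases Nat.eq_zero_or_pos i with rfl | hpos
  · simp only [if_pos rfl] at hq ⊢
    split_ifs <;> first | rfl | omega | (congr 1; omega)
  · simp only [if_neg (show ¬ i = 0 by omega)] at hq ⊢
    split_ifs <;> first | rfl | omega | (congr 1; omega)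

lemma dir2_mapsTo (hu : 1 ≤ u) (hum : u < m) (hT : T ∈ ColSet m (u+1)) :
    bk u T ∈ ColSet m u := by
  have hS := hT.1
  have hlen : ∀ i, ((bk u T).getD i []).length = (T.getD i []).length := new2_len hT
  refine ⟨⟨?_, ?_, ?_, ?_⟩, ?_, ?_⟩
  · intro r hr
    obtain ⟨i, hi, rfl⟩ := mem_getD hr
    rw [bk_length] at hi
    exact new2_sorted hT hi
  · intro i
    rw [hlen, hlen]
    exact hS.2.1 i
  · -- columns strict
    intro i j x y hx hy
    have hjy : j < ((bk u T).getD (i+1) []).length := (List.getElem?_eq_some_iff.1 hy).1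
    have hi1 : i + 1 < T.length := by
      by_contra h
      rw [bk_getD_beyond (by omega)] at hjy
      simp at hjy
    have hi : i < T.length := by omega
    have hj1 : j < (T.getD (i+1) []).length := by rwa [hlen] at hjy
    obtain ⟨x0, hx0⟩ := row_defined hS (Nat.le_succ i) hj1
    obtain ⟨y0, hy0⟩ : ∃ y0, (T.getD (i+1) [])[j]? = some y0 :=
      ⟨_, List.getElem?_eq_getElem hj1⟩
    have hxy0 : x0 < y0 := hS.2.2.1 i j x0 y0 hx0 hy0
    have hE2 := colset2_E2 hT i
    have hpl := prevp_le hT i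
    have hpl1 := prevp_le hT (i+1)
    have hprev1 : (if i + 1 = 0 then 0 else (T.getD (i+1-1) []).count u) = (T.getD i []).count u := by
      simp
    have hlenR := row_len (u := u) (rows_sorted hS i)
    have hlenS := row_len (u := u) (rows_sorted hS (i+1))
    by_cases h1 : j < (List.filter (fun x => decide (x < u)) (T.getD i [])).length
    · have hxx0 : x = x0 := by
        have := agree2_outside hT hi (j := j) (Or.inl h1)
        rw [hx, hx0] at this; exact Option.some_inj.1 this
      have hxu : x0 < u := (row_get_lt (rows_sorted hS i) hx0).2 h1
      by_cases h2 : j < (List.filter (fun x => decide (x < u)) (T.getD (i+1) [])).length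
      · have hyy0 : y = y0 := by
          have := agree2_outside hT hi1 (j := j) (Or.inl h2)
          rw [hy, hy0] at this; exact Option.some_inj.1 this
        omega
      · have : ¬ (y < u) := by rw [new2_get_lt hT hi1 hy]; omega
        omega
    push_neg at h1
    by_cases h2 : j < (List.filter (fun x => decide (x < u)) (T.getD i [])).length
        + ((T.getD i []).count u +
          ((T.getD i []).count (u+1) - (if i = 0 then 0 else (T.getD (i-1) []).count u)))
    · have hxu : x = u := by
        have := (new2_get_u hT hi (j := j)).2 ⟨h1, h2⟩
        rw [hx] at this; exact Option.some_inj.1 this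
      by_cases hs : j < (List.filter (fun x => decide (x < u)) (T.getD i [])).length
          + (T.getD i []).count u
      · -- below an original u : get u+1 below
        have hx0u : (T.getD i [])[j]? = some u := (row_get_u (rows_sorted hS i)).2 ⟨h1, hs⟩
        have hp : (T.getD i []).count u ≠ 0 := by omega
        have hal := hE2.2 hp
        have hy0e : (T.getD (i+1) [])[j]? = some (u+1) := colset2_E1 hT hx0u
        have hyy : ((bk u T).getD (i+1) [])[j]? = some (u+1) := by
          refine (new2_get_u1 hT hi1 (j := j)).2 ⟨?_, ?_⟩ <;> rw [hprev1] <;> omega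
        rw [hy] at hyy
        have : y = u + 1 := Option.some_inj.1 hyy
        omega
      · -- an original u+1 that became u : below is > u+1
        push_neg at hs
        have hx0u1 : (T.getD i [])[j]? = some (u+1) :=
          (row_get_u1 (rows_sorted hS i)).2 ⟨hs, by omega⟩
        have hx0e : x0 = u + 1 := by rw [hx0] at hx0u1; exact Option.some_inj.1 hx0u1
        have hy0gt : u + 1 < y0 := by omega
        have hjbig := (row_get_gt (rows_sorted hS (i+1)) hy0).1 hy0gt
        have hyy0 : y = y0 := by
          have := agree2_outside hT hi1 (j := j) (Or.inr hjbig)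
          rw [hy, hy0] at this; exact Option.some_inj.1 this
        omega
    push_neg at h2
    by_cases h3 : j < (List.filter (fun x => decide (x < u)) (T.getD i [])).length
        + (T.getD i []).count u + (T.getD i []).count (u+1)
    · have hxu1 : x = u + 1 := by
        have := (new2_get_u1 hT hi (j := j)).2 ⟨by omega, by omega⟩
        rw [hx] at this; exact Option.some_inj.1 this
      have hx0l : ¬ (x0 < u) := by rw [row_get_lt (rows_sorted hS i) hx0]; omega
      have hx0ne : x0 ≠ u := by
        intro h'
        have := (row_get_u (rows_sorted hS i)).1 (h' ▸ hx0)
        omega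
      have hx0h : ¬ (u + 1 < x0) := by rw [row_get_gt (rows_sorted hS i) hx0]; omega
      have hy0gt : u + 1 < y0 := by omega
      have hjbig := (row_get_gt (rows_sorted hS (i+1)) hy0).1 hy0gt
      have hyy0 : y = y0 := by
        have := agree2_outside hT hi1 (j := j) (Or.inr hjbig)
        rw [hy, hy0] at this; exact Option.some_inj.1 this
      omega
    · push_neg at h3
      have hxx0 : x = x0 := by
        have := agree2_outside hT hi (j := j) (Or.inr h3)
        rw [hx, hx0] at this; exact Option.some_inj.1 this
      have hgt : u + 1 < x0 := (row_get_gt (rows_sorted hS i) hx0).2 h3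
      have hy0gt : u + 1 < y0 := by omega
      have hjbig := (row_get_gt (rows_sorted hS (i+1)) hy0).1 hy0gt
      have hyy0 : y = y0 := by
        have := agree2_outside hT hi1 (j := j) (Or.inr hjbig)
        rw [hy, hy0] at this; exact Option.some_inj.1 this
      omega
  · intro r hr
    obtain ⟨i, hi, rfl⟩ := mem_getD hr
    rw [bk_length] at hi
    intro hnil
    have := hlen i
    rw [hnil] at this
    have hne := rows_nonempty hS hi
    have : (T.getD i []).length = 0 := by simpa using this.symm
    exact hne (List.length_eq_zero_iff.1 this)
  · intro r hr x hxr
    obtain ⟨i, hi, rfl⟩ := mem_getD hr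
    rw [bk_length] at hi
    rw [bk2_row_eq hT hi] at hxr
    have hb := hT.2.1
    rcases List.mem_append.1 hxr with hx1 | hx1
    · rcases List.mem_append.1 hx1 with hx2 | hx2
      · exact hb _ (getD_mem hi) x (List.mem_of_mem_filter hx2)
      · rcases List.mem_replicate.1 hx2 with ⟨_, rfl⟩; omega
    · rcases List.mem_append.1 hx1 with hx2 | hx2
      · rcases List.mem_replicate.1 hx2 with ⟨_, rfl⟩; omega
      · exact hb _ (getD_mem hi) x (List.mem_of_mem_filter hx2)
  · -- every column contains u
    intro j hj
    rw [hlen 0] at hj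
    obtain ⟨r, hrT, hru⟩ := List.mem_filterMap.1 (hT.2.2 j hj)
    obtain ⟨i, hi, rfl⟩ := mem_getD hrT
    have hiu := (row_get_u1 (rows_sorted hS i)).1 hru
    have hpl := prevp_le hT i
    by_cases hcase : j < (List.filter (fun x => decide (x < u)) (T.getD i [])).length
        + ((T.getD i []).count u +
          ((T.getD i []).count (u+1) - (if i = 0 then 0 else (T.getD (i-1) []).count u)))
    · have hval : ((bk u T).getD i [])[j]? = some u :=
        (new2_get_u hT hi (j := j)).2 ⟨by omega, hcase⟩
      exact List.mem_filterMap.2 ⟨_, getD_mem (by rw [bk_length]; exact hi), hval⟩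
    · push_neg at hcase
      have hprevne : (if i = 0 then 0 else (T.getD (i-1) []).count u) ≠ 0 := by
        intro h'
        rw [h'] at hcase
        omega
      have hi0 : i ≠ 0 := by
        intro h'
        rw [if_pos h'] at hprevne
        exact hprevne rfl
      rw [if_neg hi0] at hcase hprevne
      have hi1 : i - 1 + 1 = i := by omega
      have hal := (colset2_E2 hT (i-1)).2 hprevne
      rw [hi1] at hal
      have hple := (colset2_E2 hT (i-1)).1
      rw [hi1] at hple
      have hi1lt : i - 1 < T.length := by omega
      have hpl2 := prevp_le hT (i-1)
      have hval : ((bk u T).getD (i-1) [])[j]? = some u := by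
        refine (new2_get_u hT hi1lt (j := j)).2 ⟨by omega, by omega⟩
      exact List.mem_filterMap.2 ⟨_, getD_mem (by rw [bk_length]; exact hi1lt), hval⟩

end DirTwoMain

section Involution
variable {m u : ℕ} {T : List (List ℕ)}

lemma inv1 (hu : 1 ≤ u) (hum : u < m) (hT : T ∈ ColSet m u) :
    bk u (bk u T) = T := by
  have hT' := dir1_mapsTo hu hum hT
  apply List.ext_getElem
  · simp [bk_length]
  · intro i h1 h2
    have hi : i < T.length := h2
    have hi' : i < (bk u T).length := by rwa [bk_length]
    rw [← List.getD_eq_getElem (bk u (bk u T)) [] h1, ← List.getD_eq_getElem T [] hi]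
    have hprev : (if i = 0 then 0 else ((bk u T).getD (i-1) []).count u)
        = (T.getD i []).count (u+1) := by
      rcases Nat.eq_zero_or_pos i with rfl | hpos
      · rw [if_pos rfl, colset_q0 hT]
      · rw [if_neg (by omega), bk_row_eq hT (show i - 1 < T.length by omega),
          form_count_u filt_lt_mem filt_gt_mem,
          show i - 1 + 1 = i from by omega]
    rw [bk2_row_eq hT' hi', hprev, bk_row_eq hT hi,
      form_filter_lt filt_lt_mem filt_gt_mem, form_filter_gt filt_lt_mem filt_gt_mem,
      form_count_u filt_lt_mem filt_gt_mem, form_count_u1 filt_lt_mem filt_gt_mem]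
    have hle := (colset_E2 hT i).1
    have harith : (T.getD (i+1) []).count (u+1) +
        (((T.getD i []).count u - (T.getD (i+1) []).count (u+1)) + (T.getD i []).count (u+1)
          - (T.getD i []).count (u+1)) = (T.getD i []).count u := by omega
    rw [harith]
    exact (sorted_decomp u _ (rows_sorted hT.1 i)).symm

lemma inv2 (hu : 1 ≤ u) (hum : u < m) (hT : T ∈ ColSet m (u+1)) :
    bk u (bk u T) = T := by
  have hT' := dir2_mapsTo hu hum hT
  apply List.ext_getElem
  · simp [bk_length]
  · intro i h1 h2
    have hi : i < T.length := h2
    have hi' : i < (bk u T).length := by rwa [bk_length]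
    rw [← List.getD_eq_getElem (bk u (bk u T)) [] h1, ← List.getD_eq_getElem T [] hi]
    have hcnt1 : ((bk u T).getD (i+1) []).count (u+1) = (T.getD i []).count u := by
      rcases Nat.lt_or_ge (i+1) T.length with h | h
      · rw [bk2_row_eq hT h, form_count_u1 filt_lt_mem filt_gt_mem]
        simp
      · rw [bk_getD_beyond h]
        have hz : (T.getD i []).count u = 0 := by
          by_contra hc
          obtain ⟨j, hj, he⟩ :=
            List.getElem_of_mem (List.count_pos_iff.1 (Nat.pos_of_ne_zero hc))
          have := colset2_E1 hT (i := i) (j := j)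
            (by rw [List.getElem?_eq_getElem hj, he])
          rw [getD_beyond h] at this
          simp at this
        simp only [List.count_nil]
        omega
    rw [bk_row_eq hT' hi', hcnt1, bk2_row_eq hT hi,
      form_filter_lt filt_lt_mem filt_gt_mem, form_filter_gt filt_lt_mem filt_gt_mem,
      form_count_u filt_lt_mem filt_gt_mem, form_count_u1 filt_lt_mem filt_gt_mem]
    have hple := prevp_le hT i
    have harith : (T.getD i []).count u +
        ((T.getD i []).count (u+1) - (if i = 0 then 0 else (T.getD (i-1) []).count u))
        - (T.getD i []).count u
        + (if i = 0 then 0 else (T.getD (i-1) []).count u) = (T.getD i []).count (u+1) := by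
      omega
    rw [harith]
    exact (sorted_decomp u _ (rows_sorted hT.1 i)).symm

end Involution

end Plactic

open Plactic in
theorem stmt_15 (m u : ℕ) (hu : 1 ≤ u) (hum : u < m) :
    Set.BijOn (bk u) (ColSet m u) (ColSet m (u + 1)) ∧
    ∀ T ∈ ColSet m u, (bk u T).map List.length = T.map List.length := by
  refine ⟨⟨fun T hT => dir1_mapsTo hu hum hT, fun T1 h1 T2 h2 heq => ?_, fun W hW => ?_⟩,
    fun T hT => dir1_shape hT⟩
  · have := congrArg (bk u) heq
    rwa [inv1 hu hum h1, inv1 hu hum h2] at this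
  · exact ⟨bk u W, dir2_mapsTo hu hum hW, inv2 hu hum hW⟩
end
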